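/- arXiv:math/9901007 — 3 statements merged into one kernel-verified Lean document; each statement's English description precedes it below -/
import Mathlib

section
/- Let D ⊆ ℂ be a nonempty connected open set, let φ, ψ : ℂ → ℂ be real analytic on D, let ζ⁰ ∈ D with ψ(ζ⁰) ≠ 0, and suppose there is an open set W with ζ⁰ ∈ W ⊆ D such that the function z ↦ φ(z)/ψ(z) is holomorphic on W. Then for every ζ′ ∈ D there exist an open connected set V with ζ′ ∈ V ⊆ D and functions φ̂, ψ̂ : ℂ → ℂ holomorphic on V, with ψ̂ not identically zero on V, such that φ(z)·ψ̂(z) = φ̂(z)·ψ(z) for every z ∈ V (i.e. the quotient h = φ/ψ is meromorphic on D, represented locally as a quotient of holomorphic functions). -/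
open Complex Metric Set Filter

noncomputable def dzbar (f : ℂ → ℂ) (z : ℂ) : ℂ :=
  (fderiv ℝ f z 1 + Complex.I * fderiv ℝ f z Complex.I) / 2

lemma dzbar_analyticOnNhd {f : ℂ → ℂ} {D : Set ℂ} (hf : AnalyticOnNhd ℝ f D) :
    AnalyticOnNhd ℝ (dzbar f) D := by
  have h1 : AnalyticOnNhd ℝ (fderiv ℝ f) D := hf.fderiv
  have h2 : AnalyticOnNhd ℝ (fun z => fderiv ℝ f z 1) D :=
    (ContinuousLinearMap.apply ℝ ℂ (1 : ℂ)).comp_analyticOnNhd h1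
  have h3 : AnalyticOnNhd ℝ (fun z => fderiv ℝ f z Complex.I) D :=
    (ContinuousLinearMap.apply ℝ ℂ (Complex.I)).comp_analyticOnNhd h1
  have h4 : AnalyticOnNhd ℝ (fun z : ℂ => (Complex.I : ℂ)) D := analyticOnNhd_const
  have h5 := ((h2.add (h4.mul h3)).mul (analyticOnNhd_const (v := (2:ℂ)⁻¹)))
  intro z hz
  refine (h5 z hz).congr ?_
  filter_upwards with w
  simp [dzbar, div_eq_mul_inv]

lemma dzbar_eq_zero {f : ℂ → ℂ} {z : ℂ} (hf : DifferentiableAt ℂ f z) : dzbar f z = 0 := by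
  have h := hf.fderiv_restrictScalars ℝ
  have h1 : fderiv ℝ f z 1 = fderiv ℂ f z 1 := by rw [h]; rfl
  have h2 : fderiv ℝ f z Complex.I = fderiv ℂ f z Complex.I := by rw [h]; rfl
  have h3 : fderiv ℂ f z Complex.I = Complex.I * fderiv ℂ f z 1 := by
    have := (fderiv ℂ f z).map_smul Complex.I (1 : ℂ)
    simpa [smul_eq_mul] using this
  rw [dzbar, h1, h2, h3]
  have : Complex.I * (Complex.I * (fderiv ℂ f z) 1) = -((fderiv ℂ f z) 1) := by
    rw [← mul_assoc, Complex.I_mul_I]; ring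
  rw [this]; ring

lemma dzbar_congr {f g : ℂ → ℂ} {z : ℂ} (h : f =ᶠ[nhds z] g) : dzbar f z = dzbar g z := by
  rw [dzbar, dzbar, h.fderiv_eq]

lemma dzbar_mul {f g : ℂ → ℂ} {z : ℂ} (hf : DifferentiableAt ℝ f z)
    (hg : DifferentiableAt ℝ g z) :
    dzbar (fun w => f w * g w) z = dzbar f z * g z + f z * dzbar g z := by
  have h := fderiv_fun_mul hf hg
  rw [dzbar, dzbar, dzbar, h]
  simp only [ContinuousLinearMap.add_apply, ContinuousLinearMap.smul_apply, smul_eq_mul]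
  ring

lemma slice_zero {g : ℂ → ℂ} {ρ : ℝ} (hρ : 0 < ρ)
    (hg : AnalyticOnNhd ℂ g (Metric.ball (0:ℂ) ρ))
    (h0 : ∀ x : ℝ, |x| < ρ → g ↑x = 0) :
    ∀ s ∈ Metric.ball (0:ℂ) ρ, g s = 0 := by
  have hfreq : ∃ᶠ z in nhdsWithin 0 {(0:ℂ)}ᶜ, g z = 0 := by
    rw [Filter.frequently_iff]
    intro U hU
    rw [mem_nhdsWithin] at hU
    obtain ⟨V, hVopen, hV0, hVsub⟩ := hU
    obtain ⟨ε, hε, hball⟩ := Metric.isOpen_iff.1 hVopen 0 hV0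
    set x : ℝ := min ε ρ / 2 with hxdef
    have hx : 0 < x := by positivity
    have hxε : x < ε := by
      have : min ε ρ ≤ ε := min_le_left _ _
      simp only [hxdef]; linarith
    have hxρ : x < ρ := by
      have : min ε ρ ≤ ρ := min_le_right _ _
      simp only [hxdef]; linarith
    refine ⟨(x:ℂ), hVsub ⟨hball ?_, ?_⟩, h0 x (by rwa [abs_of_pos hx])⟩
    · simp only [Metric.mem_ball, dist_zero_right, Complex.norm_real, Real.norm_eq_abs]
      rwa [abs_of_pos hx]
    · simp only [Set.mem_compl_iff, Set.mem_singleton_iff]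
      exact_mod_cast ne_of_gt hx
  have := hg.eqOn_zero_of_preconnected_of_frequently_eq_zero
    (convex_ball (0:ℂ) ρ).isPreconnected (Metric.mem_ball_self hρ) hfreq
  intro s hs; exact this hs

lemma antidiag_zero {H : ℂ × ℂ → ℂ} {c : ℂ} {r : ℝ} (hr : 0 < r)
    (hH : AnalyticOnNhd ℂ H (Metric.ball (c, (starRingEnd ℂ) c) r))
    (h0 : ∀ z ∈ Metric.ball c r, H (z, (starRingEnd ℂ) z) = 0) :
    ∀ x ∈ Metric.ball (c, (starRingEnd ℂ) c) r, H x = 0 := by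
  set cb := (starRingEnd ℂ) c with hcb
  set ρ := r / 2 with hρdef
  have hρ : 0 < ρ := by positivity
  -- the parametrization
  set P : ℂ → ℂ → ℂ × ℂ := fun s d => (c + s + Complex.I * d, cb + s - Complex.I * d) with hP
  have hPmem : ∀ s d : ℂ, ‖s‖ + ‖d‖ < r → P s d ∈ Metric.ball (c, cb) r := by
    intro s d h
    rw [Metric.mem_ball, Prod.dist_eq, max_lt_iff]
    constructor
    · rw [dist_eq_norm]
      calc ‖c + s + Complex.I * d - c‖ = ‖s + Complex.I * d‖ := by ring_nf
        _ ≤ ‖s‖ + ‖Complex.I * d‖ := norm_add_le _ _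
        _ = ‖s‖ + ‖d‖ := by rw [norm_mul, Complex.norm_I, one_mul]
        _ < r := h
    · rw [dist_eq_norm]
      calc ‖cb + s - Complex.I * d - cb‖ = ‖s - Complex.I * d‖ := by ring_nf
        _ ≤ ‖s‖ + ‖Complex.I * d‖ := norm_sub_le _ _
        _ = ‖s‖ + ‖d‖ := by rw [norm_mul, Complex.norm_I, one_mul]
        _ < r := h
  have hmemρ : ∀ s d : ℂ, s ∈ Metric.ball (0:ℂ) ρ → d ∈ Metric.ball (0:ℂ) ρ →
      P s d ∈ Metric.ball (c, cb) r := by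
    intro s d hs hd
    rw [Metric.mem_ball, dist_zero_right] at hs hd
    exact hPmem s d (by rw [hρdef] at hs hd; linarith)
  -- analyticity of slices
  have hslice1 : ∀ d : ℂ, d ∈ Metric.ball (0:ℂ) ρ →
      AnalyticOnNhd ℂ (fun s => H (P s d)) (Metric.ball (0:ℂ) ρ) := by
    intro d hd
    have hinner : AnalyticOnNhd ℂ (fun s => P s d) (Metric.ball (0:ℂ) ρ) := by
      apply AnalyticOnNhd.prod
      · exact fun z hz => (analyticAt_const.add analyticAt_id).add analyticAt_const
      · exact fun z hz => (analyticAt_const.add analyticAt_id).sub analyticAt_const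
    exact hH.comp hinner (fun s hs => hmemρ s d hs hd)
  have hslice2 : ∀ s : ℂ, s ∈ Metric.ball (0:ℂ) ρ →
      AnalyticOnNhd ℂ (fun d => H (P s d)) (Metric.ball (0:ℂ) ρ) := by
    intro s hs
    have hinner : AnalyticOnNhd ℂ (fun d => P s d) (Metric.ball (0:ℂ) ρ) := by
      apply AnalyticOnNhd.prod
      · exact fun z hz => analyticAt_const.add (analyticAt_const.mul analyticAt_id)
      · exact fun z hz => analyticAt_const.sub (analyticAt_const.mul analyticAt_id)
    exact hH.comp hinner (fun d hd => hmemρ s d hs hd)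
  -- step 1 : vanishing for real d
  have step1 : ∀ d : ℝ, |d| < ρ → ∀ s ∈ Metric.ball (0:ℂ) ρ, H (P s ↑d) = 0 := by
    intro d hd
    apply slice_zero hρ (hslice1 ↑d (by simpa using hd))
    intro x hx
    have hzmem : (c + ↑x + Complex.I * ↑d) ∈ Metric.ball c r := by
      rw [Metric.mem_ball, dist_eq_norm]
      calc ‖c + ↑x + Complex.I * ↑d - c‖ = ‖(↑x + Complex.I * ↑d : ℂ)‖ := by ring_nf
        _ ≤ ‖(x:ℂ)‖ + ‖Complex.I * ↑d‖ := norm_add_le _ _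
        _ = |x| + |d| := by
            rw [norm_mul, Complex.norm_I, one_mul, Complex.norm_real, Complex.norm_real,
              Real.norm_eq_abs, Real.norm_eq_abs]
        _ < r := by rw [hρdef] at hx hd; linarith
    have := h0 _ hzmem
    have hconj : (starRingEnd ℂ) (c + ↑x + Complex.I * ↑d) = cb + ↑x - Complex.I * ↑d := by
      simp [hcb, Complex.conj_ofReal, map_add, map_mul, Complex.conj_I]
      ring
    show H (c + ↑x + Complex.I * ↑d, cb + ↑x - Complex.I * ↑d) = 0
    rw [← hconj]
    exact this
  -- step 2 : vanishing for complex s, d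
  have step2 : ∀ s ∈ Metric.ball (0:ℂ) ρ, ∀ d ∈ Metric.ball (0:ℂ) ρ, H (P s d) = 0 := by
    intro s hs
    apply slice_zero hρ (hslice2 s hs)
    intro d hd
    exact step1 d hd s hs
  -- step 3 : H vanishes on the smaller prod ball
  have step3 : ∀ x ∈ Metric.ball ((c, cb) : ℂ × ℂ) ρ, H x = 0 := by
    rintro ⟨z, w⟩ hx
    rw [Metric.mem_ball, Prod.dist_eq, max_lt_iff, dist_eq_norm, dist_eq_norm] at hx
    obtain ⟨hz, hw⟩ := hx
    set s : ℂ := ((z - c) + (w - cb)) / 2 with hs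
    set d : ℂ := ((z - c) - (w - cb)) * (-Complex.I) / 2 with hd
    have hsmem : s ∈ Metric.ball (0:ℂ) ρ := by
      rw [Metric.mem_ball, dist_zero_right, hs]
      calc ‖((z - c) + (w - cb)) / 2‖ ≤ (‖z - c‖ + ‖w - cb‖) / 2 := by
            rw [norm_div, Complex.norm_ofNat]
            have := norm_add_le (z - c) (w - cb); linarith
        _ < ρ := by linarith
    have hdmem : d ∈ Metric.ball (0:ℂ) ρ := by
      rw [Metric.mem_ball, dist_zero_right, hd]
      have : ‖((z - c) - (w - cb)) * (-Complex.I) / 2‖ = ‖(z - c) - (w - cb)‖ / 2 := by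
        rw [norm_div, norm_mul, norm_neg, Complex.norm_I, mul_one]
        simp
      rw [this]
      calc ‖(z - c) - (w - cb)‖ / 2 ≤ (‖z - c‖ + ‖w - cb‖) / 2 := by
            have := norm_sub_le (z - c) (w - cb); linarith
        _ < ρ := by linarith
    have hPeq : P s d = (z, w) := by
      rw [hP]
      simp only [Prod.mk.injEq]
      constructor
      · rw [hs, hd]
        linear_combination (-(1:ℂ)/2 * (z - c) + (1:ℂ)/2 * (w - cb)) * Complex.I_mul_I
      · rw [hs, hd]
        linear_combination ((1:ℂ)/2 * (z - c) - (1:ℂ)/2 * (w - cb)) * Complex.I_mul_I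
    rw [← hPeq]
    exact step2 s hsmem d hdmem
  -- step 4 : identity theorem
  have hev : H =ᶠ[nhds ((c, cb) : ℂ × ℂ)] 0 := by
    filter_upwards [Metric.ball_mem_nhds ((c, cb) : ℂ × ℂ) hρ] with x hx
    exact step3 x hx
  have := hH.eqOn_zero_of_preconnected_of_eventuallyEq_zero
    (convex_ball ((c, cb) : ℂ × ℂ) r).isPreconnected
    (Metric.mem_ball_self hr) hev
  intro x hx; exact this hx

lemma wronskian_prop {a b : ℂ → ℂ} {c : ℂ} {ρ : ℝ} (hρ : 0 < ρ)
    (ha : AnalyticOnNhd ℂ a (Metric.ball c ρ)) (hb : AnalyticOnNhd ℂ b (Metric.ball c ρ))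
    (hW : ∀ w ∈ Metric.ball c ρ, a w * deriv b w - deriv a w * b w = 0) :
    ∀ w ∈ Metric.ball c ρ, ∀ w' ∈ Metric.ball c ρ, a w * b w' = a w' * b w := by
  by_cases hb0 : ∀ w ∈ Metric.ball c ρ, b w = 0
  · intro w hw w' hw'; rw [hb0 w hw, hb0 w' hw']; ring
  push_neg at hb0
  obtain ⟨w₁, hw₁, hbw₁⟩ := hb0
  -- a small ball around w₁ where b does not vanish
  have hcont : ContinuousAt b w₁ := (hb w₁ hw₁).continuousAt
  have hne : ∀ᶠ w in nhds w₁, b w ≠ 0 := hcont.eventually_ne hbw₁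
  obtain ⟨ε1, hε1, hball1⟩ := Metric.eventually_nhds_iff_ball.1 hne
  obtain ⟨ε2, hε2, hball2⟩ := Metric.isOpen_iff.1 Metric.isOpen_ball w₁ hw₁
  set ε := min ε1 ε2 with hεdef
  have hε : 0 < ε := lt_min hε1 hε2
  have hsub : Metric.ball w₁ ε ⊆ Metric.ball c ρ := fun x hx =>
    hball2 (Metric.ball_subset_ball (min_le_right _ _) hx)
  have hbne : ∀ x ∈ Metric.ball w₁ ε, b x ≠ 0 := fun x hx =>
    hball1 x (Metric.ball_subset_ball (min_le_left _ _) hx)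
  -- the quotient is constant on the small ball
  set q : ℂ → ℂ := fun w => a w / b w with hq
  have hdiffq : DifferentiableOn ℂ q (Metric.ball w₁ ε) := by
    intro x hx
    exact (((ha x (hsub hx)).differentiableAt.div
      (hb x (hsub hx)).differentiableAt (hbne x hx)).differentiableWithinAt)
  have hderiv0 : ∀ x ∈ Metric.ball w₁ ε, fderiv ℂ q x = 0 := by
    intro x hx
    have hax : HasDerivAt a (deriv a x) x := (ha x (hsub hx)).differentiableAt.hasDerivAt
    have hbx : HasDerivAt b (deriv b x) x := (hb x (hsub hx)).differentiableAt.hasDerivAt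
    have hqx : HasDerivAt q ((deriv a x * b x - a x * deriv b x) / (b x)^2) x :=
      hax.div hbx (hbne x hx)
    have hzero : (deriv a x * b x - a x * deriv b x) / (b x)^2 = 0 := by
      have := hW x (hsub hx)
      rw [div_eq_zero_iff]
      left; linear_combination -this
    rw [hzero] at hqx
    have := hqx.hasFDerivAt.fderiv
    rw [this]
    ext v
    simp
  have hconst : ∀ x ∈ Metric.ball w₁ ε, q x = q w₁ := by
    intro x hx
    exact (convex_ball w₁ ε).is_const_of_fderivWithin_eq_zero hdiffq
      (fun y hy => by
        rw [fderivWithin_of_isOpen Metric.isOpen_ball hy]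
        exact hderiv0 y hy) hx (Metric.mem_ball_self hε)
  -- hence a w * b w₁ - a w₁ * b w vanishes near w₁, so everywhere on the ball
  set E : ℂ → ℂ := fun w => a w * b w₁ - a w₁ * b w with hE
  have hEanal : AnalyticOnNhd ℂ E (Metric.ball c ρ) := by
    intro x hx
    exact ((ha x hx).mul analyticAt_const).sub (analyticAt_const.mul (hb x hx))
  have hEev : E =ᶠ[nhds w₁] 0 := by
    filter_upwards [Metric.ball_mem_nhds w₁ hε] with x hx
    have hqx := hconst x hx
    rw [hq] at hqx
    simp only at hqx
    have := (div_eq_div_iff (hbne x hx) hbw₁).1 hqx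
    simp only [hE, Pi.zero_apply]
    linear_combination this
  have hkey : ∀ w ∈ Metric.ball c ρ, a w * b w₁ = a w₁ * b w := by
    intro w hw
    have := hEanal.eqOn_zero_of_preconnected_of_eventuallyEq_zero
      (convex_ball c ρ).isPreconnected hw₁ hEev hw
    simp only [hE, Pi.zero_apply] at this
    linear_combination this
  intro w hw w' hw'
  have h1 := hkey w hw
  have h2 := hkey w' hw'
  have : (a w * b w') * b w₁ = (a w' * b w) * b w₁ := by
    calc (a w * b w') * b w₁ = (a w * b w₁) * b w' := by ring
      _ = (a w₁ * b w) * b w' := by rw [h1]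
      _ = (a w₁ * b w') * b w := by ring
      _ = (a w' * b w₁) * b w := by rw [← h2]
      _ = (a w' * b w) * b w₁ := by ring
  exact mul_right_cancel₀ hbw₁ this

lemma exists_complexification {f : ℂ → ℂ} {ζ : ℂ} (hf : AnalyticAt ℝ f ζ) :
    ∃ r : ℝ, 0 < r ∧ ∃ F : ℂ × ℂ → ℂ,
      AnalyticOnNhd ℂ F (Metric.ball ((ζ, (starRingEnd ℂ) ζ) : ℂ × ℂ) r) ∧
      ∀ z ∈ Metric.ball ζ r, F (z, (starRingEnd ℂ) z) = f z := by
  obtain ⟨p, hpsa⟩ := hf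
  obtain ⟨R, hR⟩ := hpsa
  obtain ⟨r0, hr00, hr0R⟩ := ENNReal.lt_iff_exists_nnreal_btwn.1 hR.r_pos
  have hr0pos : 0 < r0 := by exact_mod_cast hr00
  obtain ⟨C, hC0, hCb⟩ := p.norm_mul_pow_le_of_lt_radius (lt_of_lt_of_le hr0R hR.r_le)
  -- the basis vectors and linear functionals
  set eT : ∀ n : ℕ, Finset (Fin n) → (Fin n → ℂ) :=
    fun n T j => if j ∈ T then 1 else Complex.I with heT
  set lA : ℂ × ℂ →L[ℂ] ℂ :=
    ((1:ℂ)/2) • ((ContinuousLinearMap.fst ℂ ℂ ℂ) + (ContinuousLinearMap.snd ℂ ℂ ℂ)) with hlA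
  set lB : ℂ × ℂ →L[ℂ] ℂ :=
    (-(Complex.I)/2) • ((ContinuousLinearMap.fst ℂ ℂ ℂ) - (ContinuousLinearMap.snd ℂ ℂ ℂ)) with hlB
  have hlAval : ∀ v : ℂ × ℂ, lA v = (v.1 + v.2) / 2 := by
    intro v
    rw [hlA]
    rw [ContinuousLinearMap.smul_apply, ContinuousLinearMap.add_apply,
      ContinuousLinearMap.coe_fst', ContinuousLinearMap.coe_snd', smul_eq_mul]
    ring
  have hlBval : ∀ v : ℂ × ℂ, lB v = (v.1 - v.2) * (-Complex.I) / 2 := by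
    intro v
    rw [hlB]
    rw [ContinuousLinearMap.smul_apply, ContinuousLinearMap.sub_apply,
      ContinuousLinearMap.coe_fst', ContinuousLinearMap.coe_snd', smul_eq_mul]
    ring
  have hlAnorm : ∀ v : ℂ × ℂ, ‖lA v‖ ≤ ‖v‖ := by
    intro v
    rw [hlAval, Prod.norm_def]
    rw [norm_div, Complex.norm_ofNat]
    have h1 := norm_add_le v.1 v.2
    have h2 : ‖v.1‖ ≤ max ‖v.1‖ ‖v.2‖ := le_max_left _ _
    have h3 : ‖v.2‖ ≤ max ‖v.1‖ ‖v.2‖ := le_max_right _ _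
    linarith
  have hlBnorm : ∀ v : ℂ × ℂ, ‖lB v‖ ≤ ‖v‖ := by
    intro v
    rw [hlBval, Prod.norm_def]
    rw [norm_div, norm_mul, norm_neg, Complex.norm_I, mul_one, Complex.norm_ofNat]
    have h1 := norm_sub_le v.1 v.2
    have h2 : ‖v.1‖ ≤ max ‖v.1‖ ‖v.2‖ := le_max_left _ _
    have h3 : ‖v.2‖ ≤ max ‖v.1‖ ‖v.2‖ := le_max_right _ _
    linarith
  set lT : ∀ n : ℕ, Finset (Fin n) → (Fin n → (ℂ × ℂ →L[ℂ] ℂ)) :=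
    fun n T j => if j ∈ T then lA else lB with hlT
  -- the complexified formal series
  set M : FormalMultilinearSeries ℂ (ℂ × ℂ) ℂ := fun n =>
    ∑ T : Finset (Fin n), (p n (eT n T)) •
      (ContinuousMultilinearMap.mkPiAlgebra ℂ (Fin n) ℂ).compContinuousLinearMap (lT n T)
    with hM
  -- norm of the coefficients
  have hpeT : ∀ n (T : Finset (Fin n)), ‖p n (eT n T)‖ ≤ ‖p n‖ := by
    intro n T
    have := (p n).le_opNorm (eT n T)
    have hprod : (∏ j, ‖eT n T j‖) = 1 := by
      apply Finset.prod_eq_one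
      intro j _
      by_cases hj : j ∈ T <;> simp [heT, hj]
    rwa [hprod, mul_one] at this
  have hMnorm : ∀ n, ‖M n‖ ≤ (2:ℝ)^n * ‖p n‖ := by
    intro n
    apply ContinuousMultilinearMap.opNorm_le_bound (by positivity)
    intro v
    rw [hM]
    simp only [ContinuousMultilinearMap.sum_apply, ContinuousMultilinearMap.smul_apply,
      ContinuousMultilinearMap.compContinuousLinearMap_apply,
      ContinuousMultilinearMap.mkPiAlgebra_apply]
    calc ‖∑ T : Finset (Fin n), p n (eT n T) • ∏ j, (lT n T j) (v j)‖
        ≤ ∑ T : Finset (Fin n), ‖p n (eT n T) • ∏ j, (lT n T j) (v j)‖ := norm_sum_le _ _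
      _ ≤ ∑ T : Finset (Fin n), ‖p n‖ * ∏ j, ‖v j‖ := by
          apply Finset.sum_le_sum
          intro T _
          rw [smul_eq_mul, norm_mul]
          apply mul_le_mul (hpeT n T) ?_ (norm_nonneg _) (norm_nonneg _)
          rw [norm_prod]
          apply Finset.prod_le_prod (fun j _ => norm_nonneg _)
          intro j _
          by_cases hj : j ∈ T <;> simp only [hlT, hj, if_true, if_false]
          · exact hlAnorm (v j)
          · exact hlBnorm (v j)
      _ = (2:ℝ)^n * ‖p n‖ * ∏ j, ‖v j‖ := by
          rw [Finset.sum_const, Finset.card_univ, Fintype.card_finset, Fintype.card_fin]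
          simp [mul_assoc, nsmul_eq_mul]
  -- radius bound
  set r1 : NNReal := r0 / 2 with hr1
  have hr1pos : 0 < r1 := by
    rw [hr1]; positivity
  have hr1r0 : (2:ℝ) * (r1:ℝ) = r0 := by
    rw [hr1, NNReal.coe_div]
    push_cast
    ring
  have hrad : (r1 : ENNReal) ≤ M.radius := by
    apply M.le_radius_of_bound C
    intro n
    calc ‖M n‖ * (r1:ℝ)^n ≤ ((2:ℝ)^n * ‖p n‖) * (r1:ℝ)^n := by
          apply mul_le_mul_of_nonneg_right (hMnorm n) (by positivity)
      _ = ‖p n‖ * ((2*(r1:ℝ))^n) := by ring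
      _ = ‖p n‖ * (r0:ℝ)^n := by rw [hr1r0]
      _ ≤ C := hCb n
  -- the complexification
  set c : ℂ × ℂ := (ζ, (starRingEnd ℂ) ζ) with hc
  set F : ℂ × ℂ → ℂ := fun x => M.sum (x - c) with hF
  have hFpow : HasFPowerSeriesOnBall F M c (r1 : ENNReal) := by
    refine ⟨le_trans hrad (le_refl _) |>.trans (le_refl _), ?_, ?_⟩
    · exact_mod_cast ENNReal.coe_pos.2 hr1pos
    · intro y hy
      have hy' : y ∈ EMetric.ball (0 : ℂ × ℂ) M.radius :=
        lt_of_lt_of_le (show edist y 0 < ((r1 : NNReal) : ENNReal) from hy) hrad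
      have := M.hasSum hy'
      simpa [hF, hc] using this
  have hFanal : AnalyticOnNhd ℂ F (Metric.ball c (r1:ℝ)) := by
    rw [← Metric.emetric_ball_nnreal]
    exact hFpow.analyticOnNhd
  refine ⟨(r1:ℝ), by exact_mod_cast hr1pos, F, hFanal, ?_⟩
  -- restriction to the antidiagonal
  intro z hz
  set u : ℂ := z - ζ with hu
  have huball : u ∈ EMetric.ball (0:ℂ) R := by
    have h1 : u ∈ Metric.ball (0:ℂ) (r0:ℝ) := by
      rw [Metric.mem_ball, dist_zero_right, hu]
      rw [Metric.mem_ball, dist_eq_norm] at hz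
      have : (r1:ℝ) ≤ r0 := by linarith [hr1r0, NNReal.coe_nonneg r1]
      linarith
    rw [← Metric.emetric_ball_nnreal] at h1
    exact lt_of_lt_of_le h1 (le_of_lt hr0R)
  -- per-term identity
  have hterm : ∀ n, M n (fun _ => (u, (starRingEnd ℂ) u)) = p n (fun _ => u) := by
    intro n
    rw [hM]
    simp only [ContinuousMultilinearMap.sum_apply, ContinuousMultilinearMap.smul_apply,
      ContinuousMultilinearMap.compContinuousLinearMap_apply,
      ContinuousMultilinearMap.mkPiAlgebra_apply]
    -- complex side values
    have hAval : lA (u, (starRingEnd ℂ) u) = (u.re : ℂ) := by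
      rw [hlAval]
      simp only
      rw [Complex.add_conj]
      push_cast
      ring
    have hBval : lB (u, (starRingEnd ℂ) u) = (u.im : ℂ) := by
      rw [hlBval]
      simp only
      rw [Complex.sub_conj]
      push_cast
      linear_combination (-(u.im:ℂ)) * Complex.I_mul_I
    -- real side decomposition
    have hdecomp : (fun _ : Fin n => u) =
        (fun _ : Fin n => (u.re : ℝ) • (1:ℂ)) + (fun _ : Fin n => (u.im : ℝ) • Complex.I) := by
      funext j
      simp only [Pi.add_apply]
      rw [Complex.real_smul, Complex.real_smul, mul_one]
      exact (Complex.re_add_im u).symm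
    rw [hdecomp, (p n).map_add_univ]
    apply Finset.sum_congr rfl
    intro T _
    have hpw : (T.piecewise (fun _ : Fin n => (u.re : ℝ) • (1:ℂ))
        (fun _ : Fin n => (u.im : ℝ) • Complex.I)) =
        fun j => (if j ∈ T then u.re else u.im) • (eT n T j) := by
      funext j
      by_cases hj : j ∈ T <;> simp [Finset.piecewise, hj, heT]
    rw [hpw, (p n).map_smul_univ]
    have hprodC : (∏ j, (lT n T j) (u, (starRingEnd ℂ) u)) =
        ((∏ j : Fin n, (if j ∈ T then u.re else u.im) : ℝ) : ℂ) := by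
      push_cast
      apply Finset.prod_congr rfl
      intro j _
      by_cases hj : j ∈ T <;> simp only [hlT, hj, if_true, if_false]
      · rw [hAval]
      · rw [hBval]
    rw [hprodC, smul_eq_mul, Complex.real_smul]
    ring
  -- assemble
  have hz2 : z = ζ + u := by rw [hu]; ring
  have hsum := hR.sum huball
  have hzc : (z, (starRingEnd ℂ) z) - c = (u, (starRingEnd ℂ) u) := by
    rw [hc, hu, Prod.mk_sub_mk]
    simp [map_sub]
  calc F (z, (starRingEnd ℂ) z) = M.sum (u, (starRingEnd ℂ) u) := by rw [hF]; simp [hzc]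
    _ = ∑' n, M n (fun _ => (u, (starRingEnd ℂ) u)) := rfl
    _ = ∑' n, p n (fun _ => u) := by
        apply tsum_congr
        intro n
        exact hterm n
    _ = p.sum u := rfl
    _ = f z := by rw [← hsum, ← hz2]

lemma slice_hasDerivAt {F : ℂ × ℂ → ℂ} {z w : ℂ} (hF : DifferentiableAt ℂ F (z, w)) :
    HasDerivAt (fun w' => F (z, w')) (fderiv ℂ F (z, w) (0, 1)) w := by
  have hinner : HasFDerivAt (fun w' : ℂ => ((z, w') : ℂ × ℂ))
      ((0 : ℂ →L[ℂ] ℂ).prod (ContinuousLinearMap.id ℂ ℂ)) w :=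
    HasFDerivAt.prodMk (hasFDerivAt_const z w) (hasFDerivAt_id w)
  have hcomp := (hF.hasFDerivAt.comp w hinner)
  have := hcomp.hasDerivAt
  simpa [Function.comp_def] using this

lemma dzbar_eq_fderiv_snd {F : ℂ × ℂ → ℂ} {f : ℂ → ℂ} {z : ℂ}
    (hF : DifferentiableAt ℂ F (z, (starRingEnd ℂ) z))
    (hev : ∀ᶠ w in nhds z, F (w, (starRingEnd ℂ) w) = f w) :
    dzbar f z = fderiv ℂ F (z, (starRingEnd ℂ) z) (0, 1) := by
  set j : ℂ →L[ℝ] ℂ × ℂ :=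
    (ContinuousLinearMap.id ℝ ℂ).prod (Complex.conjCLE.toContinuousLinearMap) with hj
  have hjval : ∀ w : ℂ, j w = (w, (starRingEnd ℂ) w) := by
    intro w
    simp [hj, ContinuousLinearMap.prod_apply]
  have hjfun : HasFDerivAt (fun w : ℂ => F (w, (starRingEnd ℂ) w))
      (((fderiv ℂ F (z, (starRingEnd ℂ) z)).restrictScalars ℝ).comp j) z := by
    have hinner : HasFDerivAt (fun w : ℂ => ((w, (starRingEnd ℂ) w) : ℂ × ℂ)) j z := by
      have := j.hasFDerivAt (x := z)
      have heq : (fun w : ℂ => ((w, (starRingEnd ℂ) w) : ℂ × ℂ)) = ⇑j := by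
        funext w; rw [hjval w]
      rw [heq]
      exact this
    have hcomp := ((hF.restrictScalars ℝ).hasFDerivAt.comp z hinner)
    rw [hF.fderiv_restrictScalars ℝ] at hcomp
    exact hcomp
  have hfder : HasFDerivAt f (((fderiv ℂ F (z, (starRingEnd ℂ) z)).restrictScalars ℝ).comp j) z := by
    apply hjfun.congr_of_eventuallyEq
    filter_upwards [hev] with w hw
    exact hw.symm
  have hfd : fderiv ℝ f z = ((fderiv ℂ F (z, (starRingEnd ℂ) z)).restrictScalars ℝ).comp j :=
    hfder.fderiv
  set L := fderiv ℂ F (z, (starRingEnd ℂ) z) with hL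
  have h1 : fderiv ℝ f z 1 = L (1, 1) := by
    rw [hfd]
    simp only [ContinuousLinearMap.comp_apply, ContinuousLinearMap.coe_restrictScalars']
    rw [hjval]
    norm_num
  have h2 : fderiv ℝ f z Complex.I = L (Complex.I, -Complex.I) := by
    rw [hfd]
    simp only [ContinuousLinearMap.comp_apply, ContinuousLinearMap.coe_restrictScalars']
    rw [hjval]
    simp [Complex.conj_I]
  have hsplit1 : L (1, 1) = L (1, 0) + L (0, 1) := by
    rw [← L.map_add]
    norm_num
  have hsplit2 : L (Complex.I, -Complex.I) = Complex.I * L (1, 0) - Complex.I * L (0, 1) := by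
    have : ((Complex.I, -Complex.I) : ℂ × ℂ) =
        Complex.I • ((1, 0) : ℂ × ℂ) + (-Complex.I) • ((0, 1) : ℂ × ℂ) := by
      simp [Prod.ext_iff]
    rw [this, L.map_add, L.map_smul, L.map_smul, smul_eq_mul, smul_eq_mul]
    ring
  rw [dzbar, h1, h2, hsplit1, hsplit2]
  linear_combination (L (1,0) / 2 - L (0,1) / 2) * Complex.I_mul_I

/-- Lemma 3.5 of the paper (elimination of singularities): if `φ, ψ` are real analytic
on a nonempty connected open set `D ⊆ ℂ`, `ψ (ζ0) ≠ 0`, and `φ/ψ` is holomorphic on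
some open neighborhood `W` of `ζ0` inside `D`, then `φ/ψ` is meromorphic on `D`:
near each point of `D` it is a quotient of holomorphic functions. -/
theorem quotient_real_analytic_holomorphic_near_point_is_meromorphic
    (D : Set ℂ) (hD : IsOpen D) (hDne : D.Nonempty) (hDconn : IsConnected D)
    (φ ψ : ℂ → ℂ) (hφ : AnalyticOnNhd ℝ φ D) (hψ : AnalyticOnNhd ℝ ψ D)
    (ζ0 : ℂ) (hζ0 : ζ0 ∈ D) (hψζ0 : ψ ζ0 ≠ 0)
    (W : Set ℂ) (hW : IsOpen W) (hζ0W : ζ0 ∈ W) (hWD : W ⊆ D)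
    (hhol : AnalyticOnNhd ℂ (fun z => φ z / ψ z) W) :
    ∀ ζ' ∈ D, ∃ V : Set ℂ, IsOpen V ∧ IsConnected V ∧ ζ' ∈ V ∧ V ⊆ D ∧
      ∃ φh ψh : ℂ → ℂ, AnalyticOnNhd ℂ φh V ∧ AnalyticOnNhd ℂ ψh V ∧
        (¬ ∀ z ∈ V, ψh z = 0) ∧ ∀ z ∈ V, φ z * ψh z = φh z * ψ z := by
  intro ζ' hζ'
  -- the function g = φ ∂ψ̄ - ∂φ̄ ψ is real analytic on D
  have hφb : AnalyticOnNhd ℝ (dzbar φ) D := dzbar_analyticOnNhd hφ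
  have hψb : AnalyticOnNhd ℝ (dzbar ψ) D := dzbar_analyticOnNhd hψ
  set g : ℂ → ℂ := fun z => φ z * dzbar ψ z - dzbar φ z * ψ z with hg
  have hganal : AnalyticOnNhd ℝ g D := fun z hz =>
    ((hφ z hz).mul (hψb z hz)).sub ((hφb z hz).mul (hψ z hz))
  -- g vanishes in a neighborhood of ζ0
  set N : Set ℂ := W ∩ {z | ψ z ≠ 0} with hN
  have hNopen : IsOpen N := by
    rw [isOpen_iff_mem_nhds]
    rintro z ⟨hzW, hzne⟩
    have h1 : W ∈ nhds z := hW.mem_nhds hzW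
    have h2 : {w : ℂ | ψ w ≠ 0} ∈ nhds z :=
      (hψ z (hWD hzW)).continuousAt.eventually_ne hzne
    exact Filter.inter_mem h1 h2
  have hζ0N : ζ0 ∈ N := ⟨hζ0W, hψζ0⟩
  have hgN : ∀ z ∈ N, g z = 0 := by
    rintro z ⟨hzW, hzne⟩
    have hNnhds : N ∈ nhds z := hNopen.mem_nhds ⟨hzW, hzne⟩
    set h : ℂ → ℂ := fun w => φ w / ψ w with hh
    have hhz : DifferentiableAt ℂ h z := (hhol z hzW).differentiableAt
    have hφev : φ =ᶠ[nhds z] fun w => h w * ψ w := by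
      filter_upwards [hNnhds] with w hw
      rw [hh]
      exact (div_mul_cancel₀ (φ w) hw.2).symm
    have hφd : dzbar φ z = dzbar (fun w => h w * ψ w) z := dzbar_congr hφev
    have hmul : dzbar (fun w => h w * ψ w) z =
        dzbar h z * ψ z + h z * dzbar ψ z :=
      dzbar_mul (hhz.restrictScalars ℝ) (hψ z (hWD hzW)).differentiableAt
    have hzero : dzbar h z = 0 := dzbar_eq_zero hhz
    have hφψ : h z * ψ z = φ z := div_mul_cancel₀ (φ z) hzne
    rw [hg]
    simp only
    rw [hφd, hmul, hzero]
    linear_combination (-(dzbar ψ z)) * hφψ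
  have hg0 : g =ᶠ[nhds ζ0] 0 := by
    filter_upwards [hNopen.mem_nhds hζ0N] with z hz
    exact hgN z hz
  have hgzero : Set.EqOn g 0 D :=
    hganal.eqOn_zero_of_preconnected_of_eventuallyEq_zero hDconn.isPreconnected hζ0 hg0
  -- ψ is not identically zero near ζ'
  have hψnl : ∀ ε > 0, ∃ z ∈ Metric.ball ζ' ε, ψ z ≠ 0 := by
    intro ε hε
    by_contra hcon
    push_neg at hcon
    have hev : ψ =ᶠ[nhds ζ'] 0 := by
      filter_upwards [Metric.ball_mem_nhds ζ' hε] with z hz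
      exact hcon z hz
    have := hψ.eqOn_zero_of_preconnected_of_eventuallyEq_zero hDconn.isPreconnected hζ' hev hζ0
    exact hψζ0 this
  -- complexifications of φ and ψ at ζ'
  obtain ⟨rD, hrD, hrDsub⟩ := Metric.isOpen_iff.1 hD ζ' hζ'
  obtain ⟨rφ, hrφ, Φ, hΦ, hΦval⟩ := exists_complexification (hφ ζ' hζ')
  obtain ⟨rψ, hrψ, Ψ, hΨ, hΨval⟩ := exists_complexification (hψ ζ' hζ')
  set cb : ℂ := (starRingEnd ℂ) ζ' with hcb
  set r : ℝ := min (min rφ rψ) rD with hrdef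
  have hr : 0 < r := lt_min (lt_min hrφ hrψ) hrD
  have hrφ' : r ≤ rφ := le_trans (min_le_left _ _) (min_le_left _ _)
  have hrψ' : r ≤ rψ := le_trans (min_le_left _ _) (min_le_right _ _)
  have hrD' : r ≤ rD := min_le_right _ _
  have hsubφ : Metric.ball ((ζ', cb) : ℂ × ℂ) r ⊆ Metric.ball ((ζ', cb) : ℂ × ℂ) rφ :=
    Metric.ball_subset_ball hrφ'
  have hsubψ : Metric.ball ((ζ', cb) : ℂ × ℂ) r ⊆ Metric.ball ((ζ', cb) : ℂ × ℂ) rψ :=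
    Metric.ball_subset_ball hrψ'
  -- the complexified Wronskian-type relation
  set T : ℂ × ℂ → ℂ := fun x => Φ x * (fderiv ℂ Ψ x ((0 : ℂ), (1 : ℂ))) -
    (fderiv ℂ Φ x ((0 : ℂ), (1 : ℂ))) * Ψ x with hT
  have hTanal : AnalyticOnNhd ℂ T (Metric.ball ((ζ', cb) : ℂ × ℂ) r) := by
    have hΨd : AnalyticOnNhd ℂ (fun x => fderiv ℂ Ψ x ((0 : ℂ), (1 : ℂ)))
        (Metric.ball ((ζ', cb) : ℂ × ℂ) r) :=
      (ContinuousLinearMap.apply ℂ ℂ (((0 : ℂ), (1 : ℂ)) : ℂ × ℂ)).comp_analyticOnNhd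
        ((hΨ.mono hsubψ).fderiv)
    have hΦd : AnalyticOnNhd ℂ (fun x => fderiv ℂ Φ x ((0 : ℂ), (1 : ℂ)))
        (Metric.ball ((ζ', cb) : ℂ × ℂ) r) :=
      (ContinuousLinearMap.apply ℂ ℂ (((0 : ℂ), (1 : ℂ)) : ℂ × ℂ)).comp_analyticOnNhd
        ((hΦ.mono hsubφ).fderiv)
    exact fun x hx => (((hΦ.mono hsubφ) x hx).mul (hΨd x hx)).sub
      ((hΦd x hx).mul ((hΨ.mono hsubψ) x hx))
  have hmemprod : ∀ z w : ℂ, dist z ζ' < r → dist w cb < r →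
      ((z, w) : ℂ × ℂ) ∈ Metric.ball ((ζ', cb) : ℂ × ℂ) r := by
    intro z w h1 h2
    rw [Metric.mem_ball, Prod.dist_eq]
    exact max_lt h1 h2
  have hdistconj : ∀ z : ℂ, dist ((starRingEnd ℂ) z) cb = dist z ζ' := by
    intro z
    rw [hcb, dist_eq_norm, dist_eq_norm, ← map_sub]
    exact Complex.norm_conj _
  have hT0 : ∀ x ∈ Metric.ball ((ζ', cb) : ℂ × ℂ) r, T x = 0 := by
    apply antidiag_zero hr hTanal
    intro z hz
    have hzr : dist z ζ' < r := by rwa [Metric.mem_ball] at hz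
    have hmem : ((z, (starRingEnd ℂ) z) : ℂ × ℂ) ∈ Metric.ball ((ζ', cb) : ℂ × ℂ) r :=
      hmemprod _ _ hzr (by rw [hdistconj]; exact hzr)
    have hΦz : Φ (z, (starRingEnd ℂ) z) = φ z :=
      hΦval z (Metric.mem_ball.2 (lt_of_lt_of_le hzr hrφ'))
    have hΨz : Ψ (z, (starRingEnd ℂ) z) = ψ z :=
      hΨval z (Metric.mem_ball.2 (lt_of_lt_of_le hzr hrψ'))
    have hΨdz : dzbar ψ z = fderiv ℂ Ψ (z, (starRingEnd ℂ) z) ((0 : ℂ), (1 : ℂ)) := by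
      apply dzbar_eq_fderiv_snd ((hΨ _ (hsubψ hmem)).differentiableAt)
      have : Metric.ball ζ' rψ ∈ nhds z :=
        Metric.isOpen_ball.mem_nhds (Metric.mem_ball.2 (lt_of_lt_of_le hzr hrψ'))
      filter_upwards [this] with w hw
      exact hΨval w hw
    have hΦdz : dzbar φ z = fderiv ℂ Φ (z, (starRingEnd ℂ) z) ((0 : ℂ), (1 : ℂ)) := by
      apply dzbar_eq_fderiv_snd ((hΦ _ (hsubφ hmem)).differentiableAt)
      have : Metric.ball ζ' rφ ∈ nhds z :=
        Metric.isOpen_ball.mem_nhds (Metric.mem_ball.2 (lt_of_lt_of_le hzr hrφ'))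
      filter_upwards [this] with w hw
      exact hΦval w hw
    have hzD : z ∈ D := hrDsub (Metric.mem_ball.2 (lt_of_lt_of_le hzr hrD'))
    have hgz : g z = 0 := hgzero hzD
    rw [hT]
    simp only
    rw [hΦz, hΨz, ← hΨdz, ← hΦdz]
    rw [hg] at hgz
    exact hgz
  -- choose the witness point and the parameter w₀
  set ρ : ℝ := r / 2 with hρdef
  have hρ : 0 < ρ := by positivity
  obtain ⟨z₂, hz₂mem, hz₂ne⟩ := hψnl ρ hρ
  have hz₂r : dist z₂ ζ' < ρ := by rwa [Metric.mem_ball] at hz₂mem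
  set w₀ : ℂ := (starRingEnd ℂ) z₂ with hw₀
  have hw₀cb : dist w₀ cb < ρ := by rw [hw₀, hdistconj]; exact hz₂r
  set V : Set ℂ := Metric.ball ζ' ρ with hV
  set φh : ℂ → ℂ := fun z => Φ (z, w₀) with hφh
  set ψh : ℂ → ℂ := fun z => Ψ (z, w₀) with hψh
  have hρr : ρ < r := by rw [hρdef]; linarith
  have hVmem : ∀ z ∈ V, ((z, w₀) : ℂ × ℂ) ∈ Metric.ball ((ζ', cb) : ℂ × ℂ) r := by
    intro z hz
    rw [hV, Metric.mem_ball] at hz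
    exact hmemprod _ _ (lt_trans hz hρr) (lt_trans hw₀cb hρr)
  have hinner : ∀ w₀' : ℂ, AnalyticOnNhd ℂ (fun z : ℂ => ((z, w₀') : ℂ × ℂ)) V :=
    fun w₀' z hz => (analyticAt_id.prod analyticAt_const)
  have hφhanal : AnalyticOnNhd ℂ φh V :=
    (hΦ.mono hsubφ).comp (hinner w₀) (fun z hz => hVmem z hz)
  have hψhanal : AnalyticOnNhd ℂ ψh V :=
    (hΨ.mono hsubψ).comp (hinner w₀) (fun z hz => hVmem z hz)
  have hψhz₂ : ψh z₂ = ψ z₂ := by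
    rw [hψh]
    exact hΨval z₂ (Metric.mem_ball.2 (lt_of_lt_of_le (lt_trans hz₂r hρr) hrψ'))
  refine ⟨V, Metric.isOpen_ball, ⟨⟨ζ', Metric.mem_ball_self hρ⟩,
    (convex_ball ζ' ρ).isPreconnected⟩, Metric.mem_ball_self hρ, ?_, φh, ψh,
    hφhanal, hψhanal, ?_, ?_⟩
  · exact fun z hz => hrDsub (Metric.ball_subset_ball (le_trans (le_of_lt hρr) hrD') hz)
  · push_neg
    exact ⟨z₂, hz₂mem, by rw [hψhz₂]; exact hz₂ne⟩
  -- the key identity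
  intro z hz
  have hzρ : dist z ζ' < ρ := by rwa [hV, Metric.mem_ball] at hz
  set a : ℂ → ℂ := fun w => Φ (z, w) with ha
  set b : ℂ → ℂ := fun w => Ψ (z, w) with hb
  have hmemB : ∀ w ∈ Metric.ball cb ρ, ((z, w) : ℂ × ℂ) ∈ Metric.ball ((ζ', cb) : ℂ × ℂ) r := by
    intro w hw
    rw [Metric.mem_ball] at hw
    exact hmemprod _ _ (lt_trans hzρ hρr) (lt_trans hw hρr)
  have hinner2 : ∀ z' : ℂ, AnalyticOnNhd ℂ (fun w : ℂ => ((z', w) : ℂ × ℂ)) (Metric.ball cb ρ) :=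
    fun z' w hw => (analyticAt_const.prod analyticAt_id)
  have haanal : AnalyticOnNhd ℂ a (Metric.ball cb ρ) :=
    (hΦ.mono hsubφ).comp (hinner2 z) (fun w hw => hmemB w hw)
  have hbanal : AnalyticOnNhd ℂ b (Metric.ball cb ρ) :=
    (hΨ.mono hsubψ).comp (hinner2 z) (fun w hw => hmemB w hw)
  have hWr : ∀ w ∈ Metric.ball cb ρ, a w * deriv b w - deriv a w * b w = 0 := by
    intro w hw
    have hda : deriv a w = fderiv ℂ Φ (z, w) ((0 : ℂ), (1 : ℂ)) :=
      (slice_hasDerivAt ((hΦ _ (hsubφ (hmemB w hw))).differentiableAt)).deriv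
    have hdb : deriv b w = fderiv ℂ Ψ (z, w) ((0 : ℂ), (1 : ℂ)) :=
      (slice_hasDerivAt ((hΨ _ (hsubψ (hmemB w hw))).differentiableAt)).deriv
    have := hT0 _ (hmemB w hw)
    rw [hT] at this
    simp only at this
    rw [ha, hb]
    simp only
    rw [hda, hdb]
    exact this
  have hprop := wronskian_prop hρ haanal hbanal hWr
  have hconjz : dist ((starRingEnd ℂ) z) cb < ρ := by rw [hdistconj]; exact hzρ
  have hw₀mem : w₀ ∈ Metric.ball cb ρ := Metric.mem_ball.2 hw₀cb
  have hkey := hprop ((starRingEnd ℂ) z) (Metric.mem_ball.2 hconjz) w₀ hw₀mem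
  have hΦz : a ((starRingEnd ℂ) z) = φ z := by
    rw [ha]
    exact hΦval z (Metric.mem_ball.2 (lt_of_lt_of_le (lt_trans hzρ hρr) hrφ'))
  have hΨz : b ((starRingEnd ℂ) z) = ψ z := by
    rw [hb]
    exact hΨval z (Metric.mem_ball.2 (lt_of_lt_of_le (lt_trans hzρ hρr) hrψ'))
  rw [hΦz, hΨz] at hkey
  exact hkey
end

section
/- Let U ⊆ ℂ be an open set, let f : ℂ → ℂ be real analytic on U, and let a ∈ ℂ with a ≠ 0 be such that the closed segment S = {t·a : t ∈ [0,1]} is contained in U. Then there exist an open set Ω with S ⊆ Ω ⊆ U and a function g : ℂ → ℂ holomorphic on Ω such that g(z) = f(z) for every z ∈ S. -/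
open scoped ENNReal

lemma analyticAt_real_extends_holo (h : ℝ → ℂ) (t₀ : ℝ) (hh : AnalyticAt ℝ h t₀) :
    ∃ δ : ℝ, 0 < δ ∧ ∃ H : ℂ → ℂ, AnalyticOnNhd ℂ H (Metric.ball (t₀ : ℂ) δ) ∧
      ∀ x : ℝ, (x : ℂ) ∈ Metric.ball (t₀ : ℂ) δ → H x = h x := by
  obtain ⟨p, r, hp⟩ := hh
  set c : ℕ → ℂ := fun n => p.coeff n with hc
  set q : FormalMultilinearSeries ℂ ℂ ℂ := FormalMultilinearSeries.ofScalars ℂ c with hqdef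
  have hnorm : ∀ n, ‖q n‖ = ‖p n‖ := fun n => by
    rw [hqdef, FormalMultilinearSeries.ofScalars_norm,
      FormalMultilinearSeries.norm_apply_eq_norm_coef]
  have hrq : r ≤ q.radius := by
    apply ENNReal.le_of_forall_nnreal_lt
    intro r' hr'
    obtain ⟨C, hC, hbound⟩ := p.norm_mul_pow_le_of_lt_radius (lt_of_lt_of_le hr' hp.r_le)
    exact q.le_radius_of_bound C fun n => (hnorm n ▸ hbound n)
  have hq0 : 0 < q.radius := lt_of_lt_of_le hp.r_pos hrq
  set H : ℂ → ℂ := fun z => q.sum (z - t₀) with hHdef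
  have hqball : HasFPowerSeriesOnBall H q (t₀ : ℂ) r := by
    refine ⟨hrq, hp.r_pos, fun {y} hy => ?_⟩
    have := (q.hasFPowerSeriesOnBall hq0).hasSum (EMetric.ball_subset_ball hrq hy)
    simpa [hHdef] using this
  have heq : ∀ x : ℝ, (x : ℂ) ∈ EMetric.ball (t₀ : ℂ) r → H x = h x := by
    intro x hx
    have hdist : edist ((x : ℂ)) ((t₀ : ℂ)) = edist x t₀ := Complex.isometry_ofReal.edist_eq x t₀
    rw [EMetric.ball, Metric.mem_eball, hdist] at hx
    have hx1 : (x - t₀ : ℝ) ∈ EMetric.ball (0 : ℝ) r := by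
      rw [EMetric.ball, Metric.mem_eball]
      simpa [edist_eq_enorm_sub] using hx
    have hx2 : ((x : ℂ) - (t₀ : ℂ)) ∈ EMetric.ball (0 : ℂ) r := by
      rw [EMetric.ball, Metric.mem_eball]
      have : edist ((x : ℂ) - (t₀ : ℂ)) 0 = edist ((x : ℂ)) ((t₀ : ℂ)) := by
        simp [edist_eq_enorm_sub]
      rw [this, hdist]; exact hx
    have hsum1 := hp.hasSum hx1
    have hsum2 := hqball.hasSum hx2
    have hterm : ∀ n, (q n fun _ => ((x : ℂ) - (t₀ : ℂ))) = p n fun _ => (x - t₀ : ℝ) := by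
      intro n
      rw [hqdef, FormalMultilinearSeries.ofScalars_apply_eq,
        FormalMultilinearSeries.apply_eq_pow_smul_coeff]
      simp only [hc]
      rw [Complex.real_smul]
      push_cast
      rw [smul_eq_mul, mul_comm]
    have hsum2' : HasSum (fun n => p n fun _ => (x - t₀ : ℝ)) (H ((t₀:ℂ) + ((x:ℂ) - (t₀:ℂ)))) :=
      HasSum.congr_fun hsum2 (fun n => (hterm n).symm)
    have e2 : (t₀ : ℂ) + ((x : ℂ) - (t₀ : ℂ)) = (x : ℂ) := by ring
    have e1 : t₀ + (x - t₀) = x := by ring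
    rw [e2] at hsum2'
    rw [e1] at hsum1
    exact hsum2'.unique hsum1
  have hfin : min r 1 ≠ ⊤ := by
    simp [ne_top_of_le_ne_top (by simp : (1:ℝ≥0∞) ≠ ⊤) (min_le_right r 1)]
  have hsub : Metric.ball (t₀ : ℂ) (min r 1).toReal ⊆ EMetric.ball (t₀ : ℂ) r := by
    rw [← Metric.emetric_ball, ENNReal.ofReal_toReal hfin]
    exact EMetric.ball_subset_ball (min_le_left r 1)
  refine ⟨(min r 1).toReal, ?_, H, ?_, ?_⟩
  · exact ENNReal.toReal_pos (ne_of_gt (lt_min hp.r_pos one_pos)) hfin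
  · exact fun z hz => hqball.analyticOnNhd z (hsub hz)
  · exact fun x hx => heq x (hsub hx)

/-- Key step inside the proof of Lemma 3.5 of the paper: the restriction of a real
analytic function `f` on `U ⊆ ℂ` to a radial closed segment `S = {t • a : t ∈ [0,1]}`
contained in `U` admits a holomorphic extension to an open neighborhood
`Ω` of `S` contained in `U`. -/
theorem real_analytic_restriction_to_segment_extends_holomorphically
    (U : Set ℂ) (hU : IsOpen U) (f : ℂ → ℂ) (hf : AnalyticOnNhd ℝ f U)
    (a : ℂ) (ha : a ≠ 0)
    (hS : {z : ℂ | ∃ t : ℝ, t ∈ Set.Icc (0 : ℝ) 1 ∧ z = t • a} ⊆ U) :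
    ∃ Ω : Set ℂ, IsOpen Ω ∧
      {z : ℂ | ∃ t : ℝ, t ∈ Set.Icc (0 : ℝ) 1 ∧ z = t • a} ⊆ Ω ∧ Ω ⊆ U ∧
      ∃ g : ℂ → ℂ, AnalyticOnNhd ℂ g Ω ∧
        ∀ z ∈ {z : ℂ | ∃ t : ℝ, t ∈ Set.Icc (0 : ℝ) 1 ∧ z = t • a}, g z = f z := by
  classical
  set h : ℝ → ℂ := fun t => f (t • a) with hhdef
  have hanal : ∀ t ∈ Set.Icc (0:ℝ) 1, AnalyticAt ℝ h t := by
    intro t ht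
    have h1 : AnalyticAt ℝ f ((t : ℝ) • a) := hf _ (hS ⟨t, ht, rfl⟩)
    have h2 : AnalyticAt ℝ (fun s : ℝ => s • a) t :=
      ((ContinuousLinearMap.id ℝ ℝ).smulRight a).analyticAt t
    exact AnalyticAt.comp (x := t) h1 h2
  choose δ hδ H hH hHeq using fun t ht => analyticAt_real_extends_holo h t (hanal t ht)
  -- compatibility of local extensions
  have compat : ∀ s t (hs : s ∈ Set.Icc (0:ℝ) 1) (ht : t ∈ Set.Icc (0:ℝ) 1),
      Set.EqOn (H s hs) (H t ht)
        (Metric.ball (s:ℂ) (δ s hs) ∩ Metric.ball (t:ℂ) (δ t ht)) := by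
    intro s t hs ht
    rcases Set.eq_empty_or_nonempty
      (Metric.ball (s:ℂ) (δ s hs) ∩ Metric.ball (t:ℂ) (δ t ht)) with he | ⟨z₀, hz₀⟩
    · rw [he]; exact fun z hz => absurd hz (Set.notMem_empty z)
    · set x₀ : ℝ := z₀.re with hx₀def
      have hre : ∀ u : ℝ, ∀ ρ : ℝ, z₀ ∈ Metric.ball (u:ℂ) ρ → (x₀ : ℂ) ∈ Metric.ball (u:ℂ) ρ := by
        intro u ρ hz
        rw [Metric.mem_ball] at hz ⊢
        have : dist (x₀ : ℂ) (u : ℂ) ≤ dist z₀ (u : ℂ) := by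
          rw [Complex.dist_eq, Complex.dist_eq]
          have : ((x₀ : ℂ) - (u : ℂ)).re = (z₀ - (u:ℂ)).re := by simp [hx₀def]
          calc ‖(x₀:ℂ) - u‖ = |((x₀:ℂ) - u).re| := by
                rw [← Complex.ofReal_sub, Complex.norm_real, Real.norm_eq_abs, Complex.ofReal_re]
            _ = |(z₀ - (u:ℂ)).re| := by rw [this]
            _ ≤ ‖z₀ - u‖ := Complex.abs_re_le_norm _
        exact lt_of_le_of_lt this hz
      have hx₀ : (x₀ : ℂ) ∈ Metric.ball (s:ℂ) (δ s hs) ∩ Metric.ball (t:ℂ) (δ t ht) :=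
        ⟨hre s _ hz₀.1, hre t _ hz₀.2⟩
      apply AnalyticOnNhd.eqOn_of_preconnected_of_frequently_eq
        ((hH s hs).mono Set.inter_subset_left) ((hH t ht).mono Set.inter_subset_right)
        (((convex_ball _ _).inter (convex_ball _ _)).isPreconnected) hx₀
      -- frequent coincidence near x₀ along real points
      have hmaps : Filter.Tendsto (fun y : ℝ => (y:ℂ))
          (nhdsWithin x₀ ({x₀}ᶜ : Set ℝ)) (nhdsWithin (x₀:ℂ) ({(x₀:ℂ)}ᶜ : Set ℂ)) := by
        rw [nhdsWithin, nhdsWithin]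
        refine Filter.Tendsto.inf Complex.continuous_ofReal.continuousAt
          (Filter.tendsto_principal_principal.2 ?_)
        intro y hy
        simpa [Complex.ofReal_inj] using hy
      have hev : ∀ᶠ y : ℝ in nhdsWithin x₀ ({x₀}ᶜ : Set ℝ), H s hs ↑y = H t ht ↑y := by
        have hopen : IsOpen {y : ℝ | (y:ℂ) ∈ Metric.ball (s:ℂ) (δ s hs) ∩
            Metric.ball (t:ℂ) (δ t ht)} :=
          (Metric.isOpen_ball.inter Metric.isOpen_ball).preimage Complex.continuous_ofReal
        have hmem : ∀ᶠ y : ℝ in nhds x₀, (y:ℂ) ∈ Metric.ball (s:ℂ) (δ s hs) ∩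
            Metric.ball (t:ℂ) (δ t ht) := hopen.mem_nhds hx₀
        filter_upwards [hmem.filter_mono nhdsWithin_le_nhds] with y hy
        rw [hHeq s hs y hy.1, hHeq t ht y hy.2]
      exact hmaps.frequently (hev.frequently)
  -- glue
  set G : ℂ → ℂ := fun z =>
    if hz : ∃ t, ∃ (ht : t ∈ Set.Icc (0:ℝ) 1), z ∈ Metric.ball (t:ℂ) (δ t ht)
    then H hz.choose hz.choose_spec.choose z else 0 with hGdef
  have hGeq : ∀ t (ht : t ∈ Set.Icc (0:ℝ) 1),
      Set.EqOn G (H t ht) (Metric.ball (t:ℂ) (δ t ht)) := by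
    intro t ht z hz
    have hex : ∃ s, ∃ (hs : s ∈ Set.Icc (0:ℝ) 1), z ∈ Metric.ball (s:ℂ) (δ s hs) := ⟨t, ht, hz⟩
    rw [hGdef]
    simp only [dif_pos hex]
    exact compat hex.choose t hex.choose_spec.choose ht ⟨hex.choose_spec.choose_spec, hz⟩
  set Ω' : Set ℂ := ⋃ (t : ℝ) (ht : t ∈ Set.Icc (0:ℝ) 1), Metric.ball (t:ℂ) (δ t ht) with hΩ'
  have hΩ'open : IsOpen Ω' := isOpen_iUnion fun t => isOpen_iUnion fun ht => Metric.isOpen_ball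
  have hGanal : AnalyticOnNhd ℂ G Ω' := by
    intro z hz
    rw [hΩ', Set.mem_iUnion] at hz
    obtain ⟨t, hz⟩ := hz
    rw [Set.mem_iUnion] at hz
    obtain ⟨ht, hz⟩ := hz
    refine (hH t ht z hz).congr ?_
    exact Filter.eventuallyEq_of_mem (Metric.isOpen_ball.mem_nhds hz)
      (fun w hw => (hGeq t ht hw).symm)
  -- final assembly
  refine ⟨((fun z => z / a) ⁻¹' Ω') ∩ U, ?_, ?_, Set.inter_subset_right, ?_⟩
  · exact IsOpen.inter (hΩ'open.preimage (continuous_id.div_const a)) hU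
  · rintro z ⟨t, ht, rfl⟩
    refine ⟨?_, hS ⟨t, ht, rfl⟩⟩
    have : (t • a) / a = (t : ℂ) := by
      rw [Complex.real_smul, mul_div_assoc, div_self ha, mul_one]
    simp only [Set.mem_preimage, this]
    rw [hΩ']
    exact Set.mem_iUnion.2 ⟨t, Set.mem_iUnion.2 ⟨ht, Metric.mem_ball_self (hδ t ht)⟩⟩
  · refine ⟨fun z => G (z / a), ?_, ?_⟩
    · intro z hz
      have h1 : AnalyticAt ℂ G (z / a) := hGanal _ hz.1
      have h2 : AnalyticAt ℂ (fun w : ℂ => w / a) z :=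
        analyticAt_id.div analyticAt_const ha
      exact AnalyticAt.comp (g := G) (f := fun w : ℂ => w / a) (x := z) h1 h2
    · rintro z ⟨t, ht, rfl⟩
      have hdiv : (t • a) / a = (t : ℂ) := by
        rw [Complex.real_smul, mul_div_assoc, div_self ha, mul_one]
      show G ((t • a) / a) = f (t • a)
      rw [hdiv, hGeq t ht (Metric.mem_ball_self (hδ t ht)), hHeq t ht t
        (Metric.mem_ball_self (hδ t ht))]
end

section
/- Let ρ : ℂ → ℝ be real analytic on an open neighborhood of 0, with ρ(0) = 0 and with nonzero real differential (Fréchet derivative over ℝ) at 0. Then there exists an open neighborhood V of 0 in ℂ with the following property. Set X = {ζ ∈ V : ρ(ζ) = 0}, V⁻ = {ζ ∈ V : ρ(ζ) < 0} and V⁺ = {ζ ∈ V : ρ(ζ) > 0}. For every function φ⁻ : ℂ → ℂ that is holomorphic on V⁻ and continuous on V⁻ ∪ X, there exists a function φ⁺ : ℂ → ℂ, continuous on V⁺ ∪ X, such that the function ζ ↦ conj(φ⁺(ζ)) is holomorphic on V⁺ and φ⁺ = φ⁻ on X. -/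
open Complex Set Metric
open scoped ENNReal NNReal


private lemma differentiableAt_conj_comp_conj {h : ℂ → ℂ} {ξ : ℂ}
    (hh : DifferentiableAt ℂ h ((starRingEnd ℂ) ξ)) :
    DifferentiableAt ℂ (fun z => (starRingEnd ℂ) (h ((starRingEnd ℂ) z))) ξ := by
  obtain ⟨d, hd⟩ : ∃ d, HasDerivAt h d ((starRingEnd ℂ) ξ) := ⟨_, hh.hasDerivAt⟩
  have : HasDerivAt (fun z => (starRingEnd ℂ) (h ((starRingEnd ℂ) z))) ((starRingEnd ℂ) d) ξ := by
    rw [hasDerivAt_iff_tendsto] at hd ⊢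
    have hconj : Filter.Tendsto (starRingEnd ℂ) (nhds ξ) (nhds ((starRingEnd ℂ) ξ)) :=
      (Complex.continuous_conj).continuousAt
    refine (hd.comp hconj).congr fun z => ?_
    simp only [Function.comp_apply]
    have h1 : ‖(starRingEnd ℂ) z - (starRingEnd ℂ) ξ‖ = ‖z - ξ‖ := by
      rw [← map_sub, RCLike.norm_conj]
    rw [h1]
    congr 1
    have : (starRingEnd ℂ) (h ((starRingEnd ℂ) z)) - (starRingEnd ℂ) (h ((starRingEnd ℂ) ξ))
        - (z - ξ) • (starRingEnd ℂ) d
        = (starRingEnd ℂ) (h ((starRingEnd ℂ) z) - h ((starRingEnd ℂ) ξ)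
            - ((starRingEnd ℂ) z - (starRingEnd ℂ) ξ) • d) := by
      simp only [smul_eq_mul, map_sub, map_mul, Complex.conj_conj]
    rw [this, RCLike.norm_conj]
  exact this.differentiableAt

private lemma complexify {g : ℝ → ℝ} (hg : AnalyticAt ℝ g 0) :
    ∃ G : ℂ → ℂ, AnalyticAt ℂ G 0 ∧ ∀ᶠ x : ℝ in nhds 0, G ↑x = g x := by
  obtain ⟨p, r, hpr⟩ := hg
  set q : FormalMultilinearSeries ℂ ℂ ℂ :=
    FormalMultilinearSeries.ofScalars ℂ (fun n => (p.coeff n : ℂ)) with hqdef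
  have hq : ∀ n, ‖q n‖ = ‖p n‖ := by
    intro n
    rw [FormalMultilinearSeries.ofScalars_norm, p.norm_apply_eq_norm_coef]
    simp
  have hrad : p.radius ≤ q.radius := by
    refine ENNReal.le_of_forall_nnreal_lt fun r' hr' => ?_
    obtain ⟨C, hC0, hC⟩ := p.norm_mul_pow_le_of_lt_radius hr'
    exact q.le_radius_of_bound C fun n => by rw [hq]; exact hC n
  have hqpos : 0 < q.radius := lt_of_lt_of_le (lt_of_lt_of_le hpr.r_pos hpr.r_le) hrad
  have hQ : HasFPowerSeriesOnBall q.sum q 0 q.radius := q.hasFPowerSeriesOnBall hqpos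
  refine ⟨q.sum, hQ.analyticAt, ?_⟩
  have hm : 0 < min r q.radius := lt_min hpr.r_pos hqpos
  obtain ⟨r', hr'0, hr'⟩ := ENNReal.lt_iff_exists_nnreal_btwn.mp hm
  have hr'r : (r' : ℝ≥0∞) < r := lt_of_lt_of_le hr' (min_le_left _ _)
  have hr'q : (r' : ℝ≥0∞) < q.radius := lt_of_lt_of_le hr' (min_le_right _ _)
  have hr'pos : (0 : ℝ) < r' := by exact_mod_cast hr'0
  filter_upwards [Metric.ball_mem_nhds (0 : ℝ) hr'pos] with x hx
  have hxn : (‖x‖₊ : ℝ≥0∞) < r' := by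
    rw [Metric.mem_ball, Real.dist_eq, sub_zero] at hx
    exact_mod_cast (by rw [← NNReal.coe_lt_coe, coe_nnnorm, Real.norm_eq_abs]; exact hx : ‖x‖₊ < r')
  have hs1 : HasSum (fun n => p n fun _ => x) (g (0 + x)) := by
    apply hpr.hasSum
    simpa [EMetric.mem_ball, enorm_eq_nnnorm] using lt_of_lt_of_le hxn hr'r.le
  have hs1' : HasSum (fun n => ((p n fun _ => x : ℝ) : ℂ)) ((g x : ℂ)) := by
    simpa using hs1.mapL Complex.ofRealCLM
  have hs2 : HasSum (fun n => q n fun _ => (x : ℂ)) (q.sum (x : ℂ)) := by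
    apply q.hasSum
    have : (‖(x : ℂ)‖₊ : ℝ≥0∞) < q.radius := by
      rw [show ‖(x : ℂ)‖₊ = ‖x‖₊ from NNReal.eq (by simp)]
      exact lt_of_lt_of_le hxn hr'q.le
    simpa [EMetric.mem_ball, enorm_eq_nnnorm] using this
  have hterm : ∀ n, (q n fun _ => (x : ℂ)) = ((p n fun _ => x : ℝ) : ℂ) := by
    intro n
    rw [hqdef, FormalMultilinearSeries.ofScalars_apply_eq,
      FormalMultilinearSeries.apply_eq_pow_smul_coeff]
    simp only [smul_eq_mul]
    push_cast
    ring
  rw [funext hterm] at hs2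
  exact hs2.unique hs1'


set_option maxHeartbeats 1000000 in
/-- One-dimensional case of Lemma 2.3 of the paper: the Schwarz reflection principle
across a real analytic arc `{ρ = 0}` with nonvanishing real differential at `0`.
Every `φ⁻` holomorphic on `V⁻ = {ζ ∈ V : ρ ζ < 0}` and continuous on `V⁻ ∪ X`,
where `X = {ζ ∈ V : ρ ζ = 0}`, admits a continuous extension `φ⁺` to `V⁺ ∪ X`
which is antiholomorphic on `V⁺ = {ζ ∈ V : ρ ζ > 0}` and agrees with `φ⁻` on `X`. -/
theorem schwarz_reflection_one_dim
    (ρ : ℂ → ℝ) (Ω : Set ℂ) (hΩ : IsOpen Ω) (h0Ω : (0 : ℂ) ∈ Ω)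
    (hρ : AnalyticOnNhd ℝ ρ Ω) (hρ0 : ρ 0 = 0)
    (hdρ : fderiv ℝ ρ 0 ≠ 0) :
    ∃ V : Set ℂ, IsOpen V ∧ (0 : ℂ) ∈ V ∧ V ⊆ Ω ∧
      ∀ φm : ℂ → ℂ,
        AnalyticOnNhd ℂ φm {ζ ∈ V | ρ ζ < 0} →
        ContinuousOn φm {ζ ∈ V | ρ ζ ≤ 0} →
        ∃ φp : ℂ → ℂ,
          ContinuousOn φp {ζ ∈ V | 0 ≤ ρ ζ} ∧
          AnalyticOnNhd ℂ (fun ζ => (starRingEnd ℂ) (φp ζ)) {ζ ∈ V | 0 < ρ ζ} ∧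
          ∀ ζ ∈ V, ρ ζ = 0 → φp ζ = φm ζ := by
  classical
  set L : ℂ →L[ℝ] ℝ := fderiv ℝ ρ 0 with hLdef
  set a : ℝ := L 1 with hadef
  set b : ℝ := L I with hbdef
  have hLv : ∀ v : ℂ, L v = v.re * a + v.im * b := by
    intro v
    have hv : v = v.re • (1 : ℂ) + v.im • I := by
      simp [Complex.real_smul, Complex.re_add_im]
    conv_lhs => rw [hv]
    rw [map_add, map_smul, map_smul]
    simp [hadef, hbdef, smul_eq_mul]
  set N : ℝ := a ^ 2 + b ^ 2 with hNdef
  have hN : 0 < N := by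
    rcases (by positivity : (0:ℝ) ≤ N).lt_or_eq with h | h
    · exact h
    · exfalso
      have ha0 : a = 0 ∧ b = 0 := by
        constructor <;> nlinarith [sq_nonneg a, sq_nonneg b]
      exact hdρ (ContinuousLinearMap.ext fun v => by
        rw [hLv v, ha0.1, ha0.2]; simp)
  set c₀ : ℂ := (b : ℂ) + (a : ℂ) * I with hc₀def
  have hc₀ : c₀ ≠ 0 := by
    intro h
    rw [Complex.ext_iff] at h
    simp [hc₀def] at h
    nlinarith [h.1, h.2]
  set e₀ : ℂ ≃L[ℂ] ℂ := ContinuousLinearEquiv.unitsEquivAut ℂ (Units.mk0 c₀ hc₀) with he₀def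
  set e : ℂ ≃L[ℝ] ℂ :=
    { toLinearEquiv := e₀.toLinearEquiv.restrictScalars ℝ
      continuous_toFun := e₀.continuous
      continuous_invFun := e₀.symm.continuous } with hedef
  -- the complexifying map F
  set F : ℂ → ℂ := fun ζ => ((L (I * ζ) : ℝ) : ℂ) + I * ((ρ ζ : ℝ) : ℂ) with hFdef
  set M₁ : ℂ →L[ℝ] ℂ :=
    Complex.ofRealCLM.comp (L.comp (ContinuousLinearMap.mul ℝ ℂ I)) with hM₁def
  have hM₁ : ∀ ζ, M₁ ζ = ((L (I * ζ) : ℝ) : ℂ) := fun ζ => rfl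
  have hρ0' : AnalyticAt ℝ ρ 0 := hρ 0 h0Ω
  have hFanal : AnalyticAt ℝ F 0 := by
    have h1 : AnalyticAt ℝ (fun ζ : ℂ => ((L (I * ζ) : ℝ) : ℂ)) 0 := M₁.analyticAt 0
    have h2 : AnalyticAt ℝ (fun ζ : ℂ => ((ρ ζ : ℝ) : ℂ)) 0 :=
      (Complex.ofRealCLM.analyticAt (ρ 0)).comp hρ0'
    exact h1.add (analyticAt_const.mul h2)
  have hρder : HasFDerivAt ρ L 0 := hρ0'.differentiableAt.hasFDerivAt
  have hFderiv : HasFDerivAt F (e : ℂ →L[ℝ] ℂ) 0 := by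
    have hd2 : HasFDerivAt (fun ζ : ℂ => ((ρ ζ : ℝ) : ℂ)) (Complex.ofRealCLM.comp L) 0 :=
      (Complex.ofRealCLM.hasFDerivAt).comp 0 hρder
    have hd2' : HasFDerivAt (fun ζ : ℂ => I * ((ρ ζ : ℝ) : ℂ))
        (I • (Complex.ofRealCLM.comp L)) 0 := hd2.const_mul I
    have hsum := (M₁.hasFDerivAt (x := (0:ℂ))).add hd2'
    have heq : (e : ℂ →L[ℝ] ℂ) = M₁ + I • (Complex.ofRealCLM.comp L) := by
      apply ContinuousLinearMap.ext
      intro v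
      have h1 : (e : ℂ →L[ℝ] ℂ) v = v * c₀ := rfl
      have h2 : L (I * v) = -v.im * a + v.re * b := by
        rw [hLv]; simp
      rw [h1]
      simp only [ContinuousLinearMap.add_apply, ContinuousLinearMap.smul_apply,
        ContinuousLinearMap.coe_comp', Function.comp_apply, Complex.ofRealCLM_apply]
      rw [hM₁ v, h2, hLv v, hc₀def]
      apply Complex.ext
      · simp only [Complex.add_re, Complex.mul_re, Complex.I_re, Complex.I_im,
          Complex.ofReal_re, Complex.ofReal_im, Complex.add_im, Complex.mul_im, smul_eq_mul]
        ring
      · simp only [Complex.add_re, Complex.mul_re, Complex.I_re, Complex.I_im,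
          Complex.ofReal_re, Complex.ofReal_im, Complex.add_im, Complex.mul_im, smul_eq_mul]
        ring
    rw [heq]
    exact hsum
  have hstrictF : HasStrictFDerivAt F (e : ℂ →L[ℝ] ℂ) 0 := by
    have h := hFanal.hasStrictFDerivAt
    rwa [hFderiv.fderiv] at h
  set Φ := hstrictF.toOpenPartialHomeomorph F with hΦdef
  have hΦcoe : ⇑Φ = F := hstrictF.toOpenPartialHomeomorph_coe
  have h0src : (0 : ℂ) ∈ Φ.source := hstrictF.mem_toOpenPartialHomeomorph_source
  have hF0 : F 0 = 0 := by simp [hFdef, hρ0]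
  have hΦ0 : Φ 0 = 0 := by rw [show Φ 0 = F 0 from congrFun hΦcoe 0, hF0]
  have h0tgt : (0 : ℂ) ∈ Φ.target := by
    have := Φ.map_source h0src
    rwa [hΦ0] at this
  have hΦsymm : AnalyticAt ℝ Φ.symm 0 := by
    have h := Φ.analyticAt_symm' (i := e) h0src
      (by rw [hΦcoe]; exact hFanal) (by rw [hΦcoe]; exact hFderiv.fderiv)
    rwa [hΦ0] at h
  -- the real-analytic parametrization of the curve
  set γ : ℝ → ℂ := fun t => Φ.symm ((t : ℝ) : ℂ) with hγdef
  have hγ : AnalyticAt ℝ γ 0 := by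
    have h := hΦsymm.comp_of_eq (Complex.ofRealCLM.analyticAt 0) (by simp)
    exact h
  have hγ0 : γ 0 = 0 := by
    have : Φ.symm (Φ 0) = 0 := Φ.left_inv h0src
    rw [hγdef]; simpa [hΦ0] using this
  -- ρ vanishes along γ near 0
  have hγρ : ∀ᶠ t : ℝ in nhds 0, ρ (γ t) = 0 := by
    have htgt : ∀ᶠ t : ℝ in nhds 0, ((t : ℝ) : ℂ) ∈ Φ.target := by
      have hc : Filter.Tendsto (fun t : ℝ => ((t : ℝ) : ℂ)) (nhds 0) (nhds 0) := by
        simpa using Complex.continuous_ofReal.tendsto 0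
      exact hc.eventually_mem (Φ.open_target.mem_nhds h0tgt)
    filter_upwards [htgt] with t ht
    have hFγ : F (γ t) = ((t : ℝ) : ℂ) := by
      have := Φ.right_inv ht
      rwa [hΦcoe] at this
    have him : (F (γ t)).im = ρ (γ t) := by simp [hFdef]
    rw [hFγ] at him
    simpa using him.symm
  -- complexify the components of γ
  have hγ1 : AnalyticAt ℝ (fun t : ℝ => (γ t).re) 0 :=
    (Complex.reCLM.analyticAt (γ 0)).comp hγ
  have hγ2 : AnalyticAt ℝ (fun t : ℝ => (γ t).im) 0 :=
    (Complex.imCLM.analyticAt (γ 0)).comp hγ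
  obtain ⟨G₁, hG₁, hG₁eq⟩ := complexify hγ1
  obtain ⟨G₂, hG₂, hG₂eq⟩ := complexify hγ2
  set Γ : ℂ → ℂ := fun ξ => G₁ ξ + G₂ ξ * I with hΓdef
  have hΓanal : AnalyticAt ℂ Γ 0 := hG₁.add (hG₂.mul analyticAt_const)
  have hΓγ : ∀ᶠ t : ℝ in nhds 0, Γ ((t : ℝ) : ℂ) = γ t := by
    filter_upwards [hG₁eq, hG₂eq] with t h1 h2
    rw [hΓdef]; simp only []
    rw [h1, h2, Complex.re_add_im]
  have hΓ0 : Γ 0 = 0 := by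
    have h := hΓγ.self_of_nhds
    simpa [hγ0] using h
  -- the derivative of Γ at 0
  have hΓder : HasDerivAt Γ (deriv Γ 0) 0 := hΓanal.differentiableAt.hasDerivAt
  set d : ℂ := deriv Γ 0 with hddef
  have hγder : HasDerivAt γ (c₀⁻¹) 0 := by
    have hsymmder : HasFDerivAt Φ.symm ((e.symm : ℂ →L[ℝ] ℂ)) 0 := by
      have h := hstrictF.to_localInverse
      have hloc : hstrictF.localInverse F e 0 = Φ.symm := rfl
      rw [hloc] at h
      rw [hF0] at h
      exact h.hasFDerivAt
    have hline : HasFDerivAt (fun t : ℝ => ((t : ℝ) : ℂ)) Complex.ofRealCLM 0 :=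
      Complex.ofRealCLM.hasFDerivAt
    have hcomp : HasFDerivAt γ ((e.symm : ℂ →L[ℝ] ℂ).comp Complex.ofRealCLM) 0 := by
      have hsymmder' : HasFDerivAt Φ.symm ((e.symm : ℂ →L[ℝ] ℂ))
          ((fun t : ℝ => ((t : ℝ) : ℂ)) 0) := by simpa using hsymmder
      exact hsymmder'.comp 0 hline
    have := hcomp.hasDerivAt
    have hval : ((e.symm : ℂ →L[ℝ] ℂ).comp Complex.ofRealCLM) 1 = c₀⁻¹ := by
      simp only [ContinuousLinearMap.coe_comp', Function.comp_apply, Complex.ofRealCLM_apply,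
        Complex.ofReal_one]
      rw [hedef]
      have : (e₀.symm : ℂ → ℂ) 1 = 1 * (c₀⁻¹) := by
        rw [he₀def]
        simpa using ContinuousLinearEquiv.unitsEquivAut_apply_symm (Units.mk0 c₀ hc₀) 1
      rw [one_mul] at this
      exact this
    rwa [hval] at this
  have hdval : d = c₀⁻¹ := by
    have h1 : HasDerivAt (fun t : ℝ => Γ ((t : ℝ) : ℂ)) d 0 := by
      have := hΓder.comp_ofReal (z := 0)
      simpa using this
    have h1' : HasDerivAt γ d 0 := h1.congr_of_eventuallyEq (Filter.EventuallyEq.symm hΓγ)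
    exact h1'.unique hγder
  have hd0 : d ≠ 0 := by rw [hdval]; exact inv_ne_zero hc₀
  set eΓ : ℂ ≃L[ℂ] ℂ := ContinuousLinearEquiv.unitsEquivAut ℂ (Units.mk0 d hd0) with heΓdef
  have hfdΓ : fderiv ℂ Γ 0 = (eΓ : ℂ →L[ℂ] ℂ) := by
    apply ContinuousLinearMap.ext_ring
    rw [fderiv_apply_one_eq_deriv]
    show d = (1 : ℂ) * d
    rw [one_mul]
  have hstrictΓ : HasStrictFDerivAt Γ (eΓ : ℂ →L[ℂ] ℂ) 0 := by
    have h := hΓanal.hasStrictFDerivAt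
    rwa [hfdΓ] at h
  set Ψ := hstrictΓ.toOpenPartialHomeomorph Γ with hΨdef
  have hΨcoe : ⇑Ψ = Γ := hstrictΓ.toOpenPartialHomeomorph_coe
  have h0srcΨ : (0 : ℂ) ∈ Ψ.source := hstrictΓ.mem_toOpenPartialHomeomorph_source
  have hΨ0 : Ψ 0 = 0 := by rw [show Ψ 0 = Γ 0 from congrFun hΨcoe 0, hΓ0]
  have hΨsymm : AnalyticAt ℂ Ψ.symm 0 := by
    have h := Ψ.analyticAt_symm' (i := eΓ) h0srcΨ
      (by rw [hΨcoe]; exact hΓanal) (by rw [hΨcoe]; exact hfdΓ)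
    rwa [hΨ0] at h
  obtain ⟨rinv, hrinv0, hΨsymmOn⟩ := hΨsymm.exists_ball_analyticOnNhd
  obtain ⟨rΓ, hrΓ0, hΓOn⟩ := hΓanal.exists_ball_analyticOnNhd
  -- the composed function H = ρ ∘ Γ and its partial derivative in the I direction
  set H : ℂ → ℝ := fun ξ => ρ (Γ ξ) with hHdef
  have hΓcontOn : ContinuousOn Γ (Metric.ball 0 rΓ) := hΓOn.continuousOn
  set U : Set ℂ := Metric.ball 0 rΓ ∩ Γ ⁻¹' Ω with hUdef
  have hUopen : IsOpen U := hΓcontOn.isOpen_inter_preimage Metric.isOpen_ball hΩ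
  have h0U : (0 : ℂ) ∈ U := ⟨Metric.mem_ball_self hrΓ0, by
    simp only [Set.mem_preimage, hΓ0]; exact h0Ω⟩
  have hHanal : AnalyticOnNhd ℝ H U := fun ξ hξ =>
    ((hρ _ hξ.2).restrictScalars).comp (hΓOn ξ hξ.1).restrictScalars
  have hfdH : AnalyticOnNhd ℝ (fderiv ℝ H) U := hHanal.fderiv
  set k : ℂ → ℝ := fun ξ => fderiv ℝ H ξ I with hkdef
  have hkcont : ContinuousOn k U :=
    (ContinuousLinearMap.apply ℝ ℝ (I : ℂ)).continuous.comp_continuousOn hfdH.continuousOn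
  have hΓderF : HasFDerivAt Γ
      ((ContinuousLinearMap.smulRight (1 : ℂ →L[ℂ] ℂ) d).restrictScalars ℝ) 0 :=
    (hasDerivAt_iff_hasFDerivAt.mp hΓder).restrictScalars ℝ
  have hk0 : k 0 = 1 := by
    have hρder0 : HasFDerivAt ρ L (Γ 0) := by rw [hΓ0]; exact hρder
    have hcompfd : fderiv ℝ H 0 =
        L.comp ((ContinuousLinearMap.smulRight (1 : ℂ →L[ℂ] ℂ) d).restrictScalars ℝ) :=
      (hρder0.comp 0 hΓderF).fderiv
    show fderiv ℝ H 0 I = 1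
    rw [hcompfd]
    have happ : (L.comp ((ContinuousLinearMap.smulRight (1 : ℂ →L[ℂ] ℂ) d).restrictScalars ℝ)) I
        = L (I * d) := by
      simp [smul_eq_mul]
    rw [happ, hdval]
    -- compute I * c₀⁻¹
    have hw : I * c₀⁻¹ = ((a / N : ℝ) : ℂ) + ((b / N : ℝ) : ℂ) * I := by
      have hmulw : c₀ * (((a / N : ℝ) : ℂ) + ((b / N : ℝ) : ℂ) * I) = I := by
        rw [hc₀def]
        apply Complex.ext
        · simp only [Complex.add_re, Complex.mul_re, Complex.I_re, Complex.I_im,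
            Complex.ofReal_re, Complex.ofReal_im, Complex.add_im, Complex.mul_im]
          field_simp
          ring
        · simp only [Complex.add_re, Complex.mul_re, Complex.I_re, Complex.I_im,
            Complex.ofReal_re, Complex.ofReal_im, Complex.add_im, Complex.mul_im]
          field_simp
          rw [hNdef]; ring
      calc I * c₀⁻¹ = (c₀ * (((a / N : ℝ) : ℂ) + ((b / N : ℝ) : ℂ) * I)) * c₀⁻¹ := by
            rw [hmulw]
        _ = (((a / N : ℝ) : ℂ) + ((b / N : ℝ) : ℂ) * I) * (c₀ * c₀⁻¹) := by ring
        _ = ((a / N : ℝ) : ℂ) + ((b / N : ℝ) : ℂ) * I := by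
            rw [mul_inv_cancel₀ hc₀, mul_one]
    rw [hw, hLv]
    simp only [Complex.add_re, Complex.mul_re, Complex.I_re, Complex.I_im,
      Complex.ofReal_re, Complex.ofReal_im, Complex.add_im, Complex.mul_im]
    field_simp
    rw [hNdef]; ring
  -- choose the good ball B
  set W : Set ℂ := U ∩ k ⁻¹' Set.Ioi 0 with hWdef
  have hWopen : IsOpen W := hkcont.isOpen_inter_preimage hUopen isOpen_Ioi
  have h0W : (0 : ℂ) ∈ W := ⟨h0U, by simp only [Set.mem_preimage, hk0]; exact Set.mem_Ioi.mpr one_pos⟩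
  set O₂ : Set ℂ := Metric.ball 0 rΓ ∩ Γ ⁻¹' (Metric.ball 0 rinv) with hO₂def
  have hO₂open : IsOpen O₂ := hΓcontOn.isOpen_inter_preimage Metric.isOpen_ball Metric.isOpen_ball
  have h0O₂ : (0 : ℂ) ∈ O₂ := ⟨Metric.mem_ball_self hrΓ0, by
    simp only [Set.mem_preimage, hΓ0]; exact Metric.mem_ball_self hrinv0⟩
  obtain ⟨rR, hrR0, hrR⟩ : ∃ r > 0, ∀ x : ℝ, |x| < r → Γ ((x : ℝ) : ℂ) = γ x ∧ ρ (γ x) = 0 := by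
    obtain ⟨ε, hε0, hε⟩ := Metric.eventually_nhds_iff.mp (hΓγ.and hγρ)
    exact ⟨ε, hε0, fun x hx => hε (by simpa [Real.dist_eq] using hx)⟩
  obtain ⟨r₁, hr₁0, hr₁⟩ := Metric.isOpen_iff.mp (hWopen.inter (hO₂open.inter Ψ.open_source)) 0
    ⟨h0W, h0O₂, h0srcΨ⟩
  set rstar : ℝ := min r₁ rR with hrstardef
  have hrstar0 : 0 < rstar := lt_min hr₁0 hrR0
  set B : Set ℂ := Metric.ball (0 : ℂ) rstar with hBdef
  have hBsub : B ⊆ W ∩ (O₂ ∩ Ψ.source) := fun ξ hξ =>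
    hr₁ (Metric.ball_subset_ball (min_le_left _ _) hξ)
  have hBW : B ⊆ W := fun ξ hξ => (hBsub hξ).1
  have hBU : B ⊆ U := fun ξ hξ => (hBW hξ).1
  have hBball : B ⊆ Metric.ball 0 rΓ := fun ξ hξ => (hBU hξ).1
  have hBsrc : B ⊆ Ψ.source := fun ξ hξ => (hBsub hξ).2.2
  have hBO₂ : B ⊆ O₂ := fun ξ hξ => (hBsub hξ).2.1
  have hreal : ∀ x : ℝ, ((x : ℝ) : ℂ) ∈ B → ρ (Γ ((x : ℝ) : ℂ)) = 0 := by
    intro x hx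
    have hxs : |x| < rstar := by
      rw [hBdef, Metric.mem_ball, dist_zero_right] at hx
      simpa using hx
    have h := hrR x (lt_of_lt_of_le hxs (min_le_right _ _))
    rw [h.1]; exact h.2
  -- the sign of ρ ∘ Γ on B is the sign of the imaginary part
  have hsign : ∀ ξ ∈ B, (0 < ρ (Γ ξ) ↔ 0 < ξ.im) ∧ (ρ (Γ ξ) = 0 ↔ ξ.im = 0) ∧
      (ρ (Γ ξ) < 0 ↔ ξ.im < 0) := by
    intro ξ hξ
    set x : ℝ := ξ.re with hxdef
    set y : ℝ := ξ.im with hydef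
    have hmemB : ∀ t : ℝ, |t| ≤ |y| → ((x : ℂ) + (t : ℂ) * I) ∈ B := by
      intro t ht
      rw [hBdef, Metric.mem_ball, dist_zero_right] at hξ ⊢
      have h1 : ‖(x : ℂ) + (t : ℂ) * I‖ = Real.sqrt (x ^ 2 + t ^ 2) := by
        rw [Complex.norm_add_mul_I]
      have h2 : ‖ξ‖ = Real.sqrt (x ^ 2 + y ^ 2) := by
        conv_lhs => rw [← Complex.re_add_im ξ]
        rw [Complex.norm_add_mul_I]
      rw [h1]
      rw [h2] at hξ
      refine lt_of_le_of_lt ?_ hξ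
      apply Real.sqrt_le_sqrt
      nlinarith [_root_.sq_abs t, _root_.sq_abs y, abs_nonneg t, abs_nonneg y]
    have hψder : ∀ t : ℝ, |t| ≤ |y| →
        HasDerivAt (fun s : ℝ => H ((x : ℂ) + (s : ℂ) * I)) (k ((x : ℂ) + (t : ℂ) * I)) t := by
      intro t ht
      have hline : HasDerivAt (fun s : ℝ => ((x : ℂ) + (s : ℂ) * I)) I t := by
        have h1 : HasDerivAt (fun s : ℝ => ((s : ℝ) : ℂ)) 1 t := by
          simpa using (hasDerivAt_id t).ofReal_comp
        have h2 := h1.mul_const I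
        rw [one_mul] at h2
        exact h2.const_add ((x : ℝ) : ℂ)
      have hpt : ((x : ℂ) + (t : ℂ) * I) ∈ U := hBU (hmemB t ht)
      have hH : HasFDerivAt H (fderiv ℝ H ((x : ℂ) + (t : ℂ) * I)) ((x : ℂ) + (t : ℂ) * I) :=
        (hHanal _ hpt).differentiableAt.hasFDerivAt
      exact HasFDerivAt.comp_hasDerivAt (l := H) t hH hline
    have hmono : StrictMonoOn (fun s : ℝ => H ((x : ℂ) + (s : ℂ) * I)) (Set.Icc (-|y|) (|y|)) := by
      apply strictMonoOn_of_deriv_pos (convex_Icc _ _)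
      · intro t ht
        exact (hψder t (abs_le.mpr ⟨ht.1, ht.2⟩)).continuousAt.continuousWithinAt
      · intro t ht
        rw [interior_Icc] at ht
        have ht' : |t| ≤ |y| := abs_le.mpr ⟨ht.1.le, ht.2.le⟩
        rw [(hψder t ht').deriv]
        exact (hBW (hmemB t ht')).2
    have hx0 : H ((x : ℂ) + ((0 : ℝ) : ℂ) * I) = 0 := by
      have hxB : ((x : ℝ) : ℂ) ∈ B := by simpa using hmemB 0 (by simp)
      have := hreal x hxB
      simpa [hHdef] using this
    have hξeq : (x : ℂ) + (y : ℂ) * I = ξ := Complex.re_add_im ξ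
    have h0mem : (0 : ℝ) ∈ Set.Icc (-|y|) |y| := ⟨neg_nonpos.mpr (abs_nonneg y), abs_nonneg y⟩
    have hymem : y ∈ Set.Icc (-|y|) |y| := ⟨neg_abs_le y, le_abs_self y⟩
    have hHξ : H ξ = ρ (Γ ξ) := rfl
    rcases lt_trichotomy y 0 with hy | hy | hy
    · have h := hmono hymem h0mem hy
      have h' : H ((x : ℂ) + ((y : ℝ) : ℂ) * I) < H ((x : ℂ) + ((0 : ℝ) : ℂ) * I) := h
      rw [hx0, hξeq, hHξ] at h'
      exact ⟨iff_of_false (by linarith) (by linarith),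
        iff_of_false (by linarith) (by linarith),
        iff_of_true h' hy⟩
    · have h : ρ (Γ ξ) = 0 := by
        have heq0 : ((x : ℂ) + ((0 : ℝ) : ℂ) * I) = ξ := by rw [← hξeq, hy]
        rw [← heq0]
        exact hx0
      exact ⟨iff_of_false (by linarith) (by linarith),
        iff_of_true h hy, iff_of_false (by linarith) (by linarith)⟩
    · have h := hmono h0mem hymem hy
      have h' : H ((x : ℂ) + ((0 : ℝ) : ℂ) * I) < H ((x : ℂ) + ((y : ℝ) : ℂ) * I) := h
      rw [hx0, hξeq, hHξ] at h'
      exact ⟨iff_of_true h' hy, iff_of_false (by linarith) (by linarith),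
        iff_of_false (by linarith) (by linarith)⟩
  -- the neighborhood V
  set V : Set ℂ := Γ '' B with hVdef
  have hVΨ : V = ⇑Ψ '' B := by rw [hΨcoe]
  have hVopen : IsOpen V := by
    rw [hVΨ]
    exact Ψ.isOpen_image_of_subset_source Metric.isOpen_ball hBsrc
  have h0V : (0 : ℂ) ∈ V := ⟨0, Metric.mem_ball_self hrstar0, hΓ0⟩
  have hVΩ : V ⊆ Ω := by
    rintro ζ ⟨ξ, hξ, rfl⟩
    exact (hBU hξ).2
  have hinvΓ : ∀ ξ ∈ B, Ψ.symm (Γ ξ) = ξ := by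
    intro ξ hξ
    have h := Ψ.left_inv (hBsrc hξ)
    rwa [show Ψ ξ = Γ ξ from congrFun hΨcoe ξ] at h
  have hmemV : ∀ ζ ∈ V, Ψ.symm ζ ∈ B ∧ Γ (Ψ.symm ζ) = ζ := by
    rintro ζ ⟨ξ, hξ, rfl⟩
    rw [hinvΓ ξ hξ]
    exact ⟨hξ, rfl⟩
  have hVtgt : V ⊆ Ψ.target := by
    rintro ζ ⟨ξ, hξ, rfl⟩
    have := Ψ.map_source (hBsrc hξ)
    rwa [show Ψ ξ = Γ ξ from congrFun hΨcoe ξ] at this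
  have hVrinv : V ⊆ Metric.ball 0 rinv := by
    rintro ζ ⟨ξ, hξ, rfl⟩
    exact (hBO₂ hξ).2
  refine ⟨V, hVopen, h0V, hVΩ, ?_⟩
  intro φm hφm hφmc
  set φp : ℂ → ℂ := fun ζ => φm (Γ ((starRingEnd ℂ) (Ψ.symm ζ))) with hφpdef
  have hconjB : ∀ ξ ∈ B, (starRingEnd ℂ) ξ ∈ B := by
    intro ξ hξ
    rw [hBdef, Metric.mem_ball, dist_zero_right] at hξ ⊢
    rwa [RCLike.norm_conj]
  have hΨsymmContOn : ContinuousOn Ψ.symm V := Ψ.continuousOn_symm.mono hVtgt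
  have hRcont : ContinuousOn (fun ζ => Γ ((starRingEnd ℂ) (Ψ.symm ζ))) V := by
    apply hΓcontOn.comp (Complex.continuous_conj.comp_continuousOn hΨsymmContOn)
    intro ζ hζ
    exact hBball (hconjB _ (hmemV ζ hζ).1)
  have hRmaps : ∀ ζ ∈ V, Γ ((starRingEnd ℂ) (Ψ.symm ζ)) ∈ V ∧
      (0 ≤ ρ ζ → ρ (Γ ((starRingEnd ℂ) (Ψ.symm ζ))) ≤ 0) ∧
      (0 < ρ ζ → ρ (Γ ((starRingEnd ℂ) (Ψ.symm ζ))) < 0) := by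
    intro ζ hζ
    obtain ⟨hξB, hΓξ⟩ := hmemV ζ hζ
    have hcξ : (starRingEnd ℂ) (Ψ.symm ζ) ∈ B := hconjB _ hξB
    have hsξ := hsign _ hξB
    have hscξ := hsign _ hcξ
    have him : ((starRingEnd ℂ) (Ψ.symm ζ)).im = -(Ψ.symm ζ).im := Complex.conj_im _
    have hζρ : ρ ζ = ρ (Γ (Ψ.symm ζ)) := by rw [hΓξ]
    refine ⟨⟨_, hcξ, rfl⟩, ?_, ?_⟩
    · intro h0
      by_contra hcon
      push_neg at hcon
      have h1 : 0 < ((starRingEnd ℂ) (Ψ.symm ζ)).im := (hscξ.1).mp hcon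
      rw [him] at h1
      have h2 : (Ψ.symm ζ).im < 0 := by linarith
      have h3 : ρ (Γ (Ψ.symm ζ)) < 0 := (hsξ.2.2).mpr h2
      rw [← hζρ] at h3
      linarith
    · intro h0
      have h1 : 0 < (Ψ.symm ζ).im := by
        apply (hsξ.1).mp
        rw [← hζρ]
        exact h0
      apply (hscξ.2.2).mpr
      rw [him]
      linarith
  have hg1 : ContinuousOn φp {ζ ∈ V | 0 ≤ ρ ζ} := by
    apply ContinuousOn.comp hφmc (hRcont.mono (Set.sep_subset _ _))
    rintro ζ ⟨hζV, hζρ⟩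
    obtain ⟨hRV, h1, _⟩ := hRmaps ζ hζV
    exact ⟨hRV, h1 hζρ⟩
  have hρcontV : ContinuousOn ρ V := (hρ.mono hVΩ).continuousOn
  have hSopen : IsOpen {ζ ∈ V | 0 < ρ ζ} := by
    have h := hρcontV.isOpen_inter_preimage (t := Set.Ioi 0) hVopen isOpen_Ioi
    have : {ζ ∈ V | 0 < ρ ζ} = V ∩ ρ ⁻¹' Set.Ioi 0 := by
      ext ζ; simp [Set.mem_sep_iff, Set.mem_Ioi]
    rwa [this]
  have hg2 : AnalyticOnNhd ℂ (fun ζ => (starRingEnd ℂ) (φp ζ)) {ζ ∈ V | 0 < ρ ζ} := by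
    apply DifferentiableOn.analyticOnNhd ?_ hSopen
    rintro ζ ⟨hζV, hζρ⟩
    obtain ⟨hξB, hΓξ⟩ := hmemV ζ hζV
    have hξim : 0 < (Ψ.symm ζ).im := by
      apply ((hsign _ hξB).1).mp
      rw [hΓξ]
      exact hζρ
    have hd1 : DifferentiableAt ℂ Ψ.symm ζ := (hΨsymmOn ζ (hVrinv hζV)).differentiableAt
    have hcξB : (starRingEnd ℂ) (Ψ.symm ζ) ∈ B := hconjB _ hξB
    have hΓdiff : DifferentiableAt ℂ Γ ((starRingEnd ℂ) (Ψ.symm ζ)) :=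
      (hΓOn _ (hBball hcξB)).differentiableAt
    have hRVneg : Γ ((starRingEnd ℂ) (Ψ.symm ζ)) ∈ {ζ ∈ V | ρ ζ < 0} := by
      refine ⟨⟨_, hcξB, rfl⟩, ?_⟩
      apply ((hsign _ hcξB).2.2).mpr
      rw [Complex.conj_im]
      linarith
    have hφmdiff : DifferentiableAt ℂ φm (Γ ((starRingEnd ℂ) (Ψ.symm ζ))) :=
      (hφm _ hRVneg).differentiableAt
    have hinner : DifferentiableAt ℂ
        (fun w => (starRingEnd ℂ) (φm (Γ ((starRingEnd ℂ) w)))) (Ψ.symm ζ) := by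
      apply differentiableAt_conj_comp_conj (h := fun w => φm (Γ w))
      exact hφmdiff.comp _ hΓdiff
    exact (hinner.comp ζ hd1).differentiableWithinAt
  refine ⟨φp, hg1, hg2, ?_⟩
  intro ζ hζV hζρ
  obtain ⟨hξB, hΓξ⟩ := hmemV ζ hζV
  have him0 : (Ψ.symm ζ).im = 0 := by
    apply ((hsign _ hξB).2.1).mp
    rw [hΓξ]
    exact hζρ
  have hconjeq : (starRingEnd ℂ) (Ψ.symm ζ) = Ψ.symm ζ := Complex.conj_eq_iff_im.mpr him0
  show φm (Γ ((starRingEnd ℂ) (Ψ.symm ζ))) = φm ζ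
  rw [hconjeq, hΓξ]
end
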